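/- arXiv:2209.14428 — 9 statements merged into one kernel-verified Lean document; each statement's English description precedes it below -/
import Mathlib

section
/- For nonnegative integers j and k, ∫_{-∞}^0 x^{j+k} / (2 sinh(π√(-x))) dx = η(-1-2j-2k), where η is the Dirichlet eta function. Consequently, for polynomials P₁, P₂ with complex coefficients, the pairing ⟨P₁, P₂⟩ defined by replacing each monomial product x^j · x^k with η(-1-2j-2k) equals ∫_{-∞}^0 P₁(x)·conj(P₂(x)) / (2 sinh(π√(-x))) dx. -/
open MeasureTheory

/-- The Dirichlet eta function. -/
noncomputable def eta (s : ℂ) : ℂ := (1 - 2 ^ (1 - s)) * riemannZeta s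

/-- The inner product on `ℂ[x]` defined by `⟨x^j, x^k⟩ = η(-1-2j-2k)`,
extended sesquilinearly. -/
noncomputable def innerP (P₁ P₂ : Polynomial ℂ) : ℂ :=
  ∑ j ∈ Finset.range (P₁.natDegree + 1), ∑ k ∈ Finset.range (P₂.natDegree + 1),
    P₁.coeff j * (starRingEnd ℂ) (P₂.coeff k) * eta (-1 - 2 * (j : ℂ) - 2 * (k : ℂ))

open Real Set Filter

noncomputable def Fs : ℝ → ℂ := fun t => ((Real.sinh (π * t))⁻¹ : ℝ)

noncomputable def gI (n : ℕ) : ℝ → ℂ :=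
  fun x => (x : ℂ) ^ n / (2 * (Real.sinh (π * Real.sqrt (-x)) : ℝ))

/-- Sum over odd integers of `1/k^m`. -/
lemma tsum_odd (m : ℕ) (hm : 1 < m) :
    ∑' i : ℕ, (1 : ℂ) / ((2 * i + 1 : ℕ) : ℂ) ^ m
      = (1 - 1 / 2 ^ m) * riemannZeta m := by
  have hsum : Summable (fun k : ℕ => (1 : ℂ) / (k : ℂ) ^ m) := by
    apply Summable.of_norm
    have : Summable (fun k : ℕ => 1 / (k : ℝ) ^ m) := summable_one_div_nat_pow.mpr hm
    apply this.congr
    intro k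
    simp [norm_div, norm_pow]
  have heven : (fun k : ℕ => (1 : ℂ) / ((2 * k : ℕ) : ℂ) ^ m)
      = fun k : ℕ => (1 / 2 ^ m) * ((1 : ℂ) / (k : ℂ) ^ m) := by
    funext k
    push_cast
    simp only [div_eq_mul_inv, mul_pow, mul_inv, one_mul]
  have he : Summable (fun k : ℕ => (1 : ℂ) / ((2 * k : ℕ) : ℂ) ^ m) := by
    rw [heven]; exact hsum.mul_left _
  have ho : Summable (fun k : ℕ => (1 : ℂ) / ((2 * k + 1 : ℕ) : ℂ) ^ m) :=
    hsum.comp_injective (fun a b h => by omega)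
  have h := tsum_even_add_odd (f := fun k : ℕ => (1 : ℂ) / ((k : ℕ) : ℂ) ^ m) he ho
  have h2 : ∑' (k : ℕ), (1:ℂ) / ((2 * k : ℕ) : ℂ) ^ m
      = (1 / 2 ^ m) * ∑' k : ℕ, (1:ℂ) / ((k : ℕ):ℂ)^m := by
    rw [heven, tsum_mul_left]
  rw [zeta_nat_eq_tsum_of_gt_one hm]
  rw [h2] at h
  linear_combination h

lemma hasSum_Fs {t : ℝ} (ht : 0 < t) :
    HasSum (fun i : ℕ => (2 : ℂ) * rexp (-(((2 * i + 1 : ℕ) : ℝ) * π) * t)) (Fs t) := by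
  have hr0 : (0:ℝ) ≤ rexp (-(2 * π * t)) := (exp_pos _).le
  have hr1 : rexp (-(2 * π * t)) < 1 := by
    rw [exp_lt_one_iff]
    have := Real.pi_pos
    nlinarith
  have hgeo := (hasSum_geometric_of_lt_one hr0 hr1).mul_left (2 * rexp (-(π * t)))
  have key : HasSum (fun i : ℕ => 2 * rexp (-(((2 * i + 1 : ℕ) : ℝ) * π) * t))
      (2 * rexp (-(π * t)) * (1 - rexp (-(2 * π * t)))⁻¹) := by
    refine hgeo.congr_fun fun i => ?_
    rw [← Real.exp_nat_mul, mul_assoc, ← Real.exp_add]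
    congr 2
    push_cast
    ring
  have hs : Real.sinh (π * t) = (rexp (π * t) - rexp (-(π * t))) / 2 := Real.sinh_eq _
  have hpt : (0:ℝ) < π * t := by positivity
  have huv : rexp (π * t) - rexp (-(π * t)) ≠ 0 := by
    have := Real.sinh_pos_iff.mpr hpt
    rw [hs] at this; intro h; rw [h] at this; norm_num at this
  have hee : rexp (π * t) * rexp (-(π * t)) = 1 := by
    rw [← Real.exp_add]; simp
  have hv : (1:ℝ) - rexp (-(2 * π * t))
      = rexp (-(π * t)) * (rexp (π * t) - rexp (-(π * t))) := by
    have hee2 : rexp (-(2 * π * t)) = rexp (-(π * t)) * rexp (-(π * t)) := by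
      rw [← Real.exp_add]; ring_nf
    rw [hee2]; linear_combination -hee
  have hval : 2 * rexp (-(π * t)) * (1 - rexp (-(2 * π * t)))⁻¹ = (Real.sinh (π * t))⁻¹ := by
    rw [hs, hv]
    have h3 : rexp (-(π * t)) ≠ 0 := (exp_pos _).ne'
    field_simp
  rw [Fs, ← hval]
  exact_mod_cast Complex.hasSum_ofReal.mpr key

lemma mellin_Fs (n : ℕ) :
    mellin Fs ((2 * n + 2 : ℕ) : ℂ)
      = 2 * Complex.Gamma ((2 * n + 2 : ℕ) : ℂ) / (π : ℂ) ^ (2 * n + 2)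
        * ((1 - 1 / 2 ^ (2 * n + 2)) * riemannZeta ((2 * n + 2 : ℕ) : ℂ)) := by
  set m : ℕ := 2 * n + 2 with hm
  have hm1 : 1 < m := by omega
  have hsre : ((m : ℂ)).re = (m : ℝ) := by simp
  have h := hasSum_mellin (F := Fs) (a := fun _ : ℕ => (2 : ℂ))
    (p := fun i : ℕ => ((2 * i + 1 : ℕ) : ℝ) * π) (s := (m : ℂ))
    (fun i => Or.inr (by positivity))
    (by rw [hsre]; positivity)
    (fun t ht => hasSum_Fs ht)
    ?_
  · have := h.tsum_eq
    rw [← this]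
    have hterm : ∀ i : ℕ, Complex.Gamma (m : ℂ) * 2 / ((((2 * i + 1 : ℕ) : ℝ) * π : ℝ) : ℂ) ^ (m : ℂ)
        = (2 * Complex.Gamma (m : ℂ) / (π : ℂ) ^ m) * ((1 : ℂ) / ((2 * i + 1 : ℕ) : ℂ) ^ m) := by
      intro i
      rw [Complex.ofReal_mul, Complex.mul_cpow_ofReal_nonneg (by positivity) Real.pi_pos.le]
      rw [show ((((2 * i + 1 : ℕ) : ℝ)) : ℂ) = ((2 * i + 1 : ℕ) : ℂ) by push_cast; ring]
      rw [Complex.cpow_natCast, Complex.cpow_natCast]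
      ring
    calc ∑' i : ℕ, Complex.Gamma (m : ℂ) * 2 / ((((2 * i + 1 : ℕ) : ℝ) * π : ℝ) : ℂ) ^ (m : ℂ)
        = ∑' i : ℕ, (2 * Complex.Gamma (m : ℂ) / (π : ℂ) ^ m) * ((1:ℂ) / ((2 * i + 1 : ℕ) : ℂ) ^ m) := by
          exact tsum_congr hterm
      _ = (2 * Complex.Gamma (m : ℂ) / (π : ℂ) ^ m) * ∑' i : ℕ, (1:ℂ) / ((2 * i + 1 : ℕ) : ℂ) ^ m := by
          rw [tsum_mul_left]
      _ = _ := by rw [tsum_odd m hm1]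
  · rw [hsre]
    have hb : Summable (fun i : ℕ => (2:ℝ) / ((i:ℝ) + 1) ^ 2) := by
      have h0 : Summable (fun k : ℕ => (1:ℝ) / (k : ℝ) ^ 2) :=
        summable_one_div_nat_pow.mpr one_lt_two
      have h1 : Summable (fun i : ℕ => (1:ℝ) / ((i + 1 : ℕ) : ℝ) ^ 2) :=
        (summable_nat_add_iff (f := fun k : ℕ => (1:ℝ) / (k : ℝ) ^ 2) 1).mpr h0
      have h2 : Summable (fun i : ℕ => (1:ℝ) / ((i:ℝ) + 1) ^ 2) := by
        refine h1.congr fun i => ?_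
        push_cast
        ring
      exact (h2.mul_left 2).congr (fun i => by rw [mul_one_div])
    refine Summable.of_nonneg_of_le (fun i => by positivity) (fun i => ?_) hb
    show ‖(2:ℂ)‖ / ((((2 * i + 1 : ℕ) : ℝ)) * π) ^ ((m:ℕ):ℝ) ≤ (2:ℝ) / ((i:ℝ) + 1) ^ 2
    rw [Real.rpow_natCast, Complex.norm_ofNat]
    have hpi : (1:ℝ) ≤ π := by linarith [Real.pi_gt_three]
    have hc : ((i:ℝ) + 1) ≤ ((2 * i + 1 : ℕ) : ℝ) := by push_cast; linarith
    have hbase : (i:ℝ) + 1 ≤ ((2 * i + 1 : ℕ) : ℝ) * π := by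
      nlinarith [hc, hpi, (Nat.cast_nonneg (2 * i + 1) : (0:ℝ) ≤ _), (Nat.cast_nonneg i : (0:ℝ) ≤ _)]
    have hone : (1:ℝ) ≤ ((2 * i + 1 : ℕ) : ℝ) * π := by
      linarith [hbase, (Nat.cast_nonneg i : (0:ℝ) ≤ _)]
    have h1 : ((i:ℝ) + 1) ^ 2 ≤ (((2 * i + 1 : ℕ) : ℝ) * π) ^ m :=
      le_trans (pow_le_pow_left₀ (by positivity) hbase 2) (pow_le_pow_right₀ hone (by omega))
    gcongr

lemma image_neg_sq : (fun t : ℝ => -t ^ 2) '' Ioi 0 = Iio 0 := by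
  ext x
  constructor
  · rintro ⟨t, ht, rfl⟩
    have : (0:ℝ) < t := ht
    simp only [mem_Iio]
    nlinarith
  · intro hx
    refine ⟨Real.sqrt (-x), ?_, ?_⟩
    · exact Real.sqrt_pos.mpr (by simpa using (mem_Iio.mp hx))
    · show -Real.sqrt (-x) ^ 2 = x
      rw [Real.sq_sqrt (by simpa using (mem_Iio.mp hx).le : (0:ℝ) ≤ -x)]
      ring

lemma eqOn_subst (n : ℕ) :
    EqOn (fun t : ℝ => |(-(2 * t))| • gI n (-t ^ 2))
      (fun t : ℝ => (-1 : ℂ) ^ n * ((t : ℂ) ^ (2 * n + 1) * Fs t)) (Ioi 0) := by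
  intro t ht
  have ht' : (0:ℝ) < t := ht
  have habs : |(-(2 * t))| = 2 * t := by rw [abs_neg, abs_of_pos (by linarith)]
  have hsq : Real.sqrt (-(-t ^ 2)) = t := by rw [neg_neg, Real.sqrt_sq ht'.le]
  have hsne : ((Real.sinh (π * t) : ℝ) : ℂ) ≠ 0 := by
    exact_mod_cast (Real.sinh_pos_iff.mpr (by positivity)).ne'
  simp only [gI, Fs, habs, hsq, Complex.real_smul]
  push_cast
  rw [show (-(t:ℂ)^2)^n = (-1)^n * (t:ℂ)^(2*n) by rw [neg_pow, pow_mul]]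
  field_simp
  ring

lemma integrableOn_pow_div_sinh (n : ℕ) :
    IntegrableOn (fun t : ℝ => t ^ (2 * n + 1) * (Real.sinh (π * t))⁻¹) (Ioi 0) := by
  have hcont : ContinuousOn (fun t : ℝ => t ^ (2 * n + 1) * (Real.sinh (π * t))⁻¹) (Ioi 0) := by
    apply (continuousOn_pow _).mul
    apply ContinuousOn.inv₀
    · exact (Real.continuous_sinh.comp (continuous_const.mul continuous_id)).continuousOn
    · intro t ht
      exact (Real.sinh_pos_iff.mpr (mul_pos Real.pi_pos ht)).ne'
  have hmeas : Measurable (fun t : ℝ => t ^ (2 * n + 1) * (Real.sinh (π * t))⁻¹) := by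
    fun_prop
  have h1 : IntegrableOn (fun t : ℝ => t ^ (2 * n + 1) * (Real.sinh (π * t))⁻¹) (Ioc 0 1) := by
    refine Measure.integrableOn_of_bounded (M := 1 / π) (by simp) ?_ ?_
    · exact hmeas.aestronglyMeasurable
    · filter_upwards [self_mem_ae_restrict measurableSet_Ioc] with t ht
      obtain ⟨ht0, ht1⟩ := ht
      have hsp : 0 < Real.sinh (π * t) := Real.sinh_pos_iff.mpr (by positivity)
      have hle : π * t ≤ Real.sinh (π * t) := Real.self_le_sinh_iff.mpr (by positivity)
      have htp : t ^ (2 * n + 1) ≤ t :=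
        by simpa using pow_le_pow_of_le_one ht0.le ht1 (by omega : 1 ≤ 2 * n + 1)
      have hnn : 0 ≤ t ^ (2 * n + 1) * (Real.sinh (π * t))⁻¹ := by positivity
      rw [Real.norm_of_nonneg hnn, ← div_eq_mul_inv, div_le_div_iff₀ hsp Real.pi_pos]
      nlinarith [Real.pi_pos, pow_nonneg ht0.le (2 * n + 1)]
  have h2 : IntegrableOn (fun t : ℝ => t ^ (2 * n + 1) * (Real.sinh (π * t))⁻¹) (Ioi 1) := by
    set c : ℝ := rexp (-(2 * π)) with hc
    have hc1 : c < 1 := by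
      rw [hc, Real.exp_lt_one_iff]
      have := Real.pi_pos; linarith
    have hc0 : 0 < c := Real.exp_pos _
    have hg : IntegrableOn (fun t : ℝ => (2 / (1 - c)) * (t ^ (2 * n + 1) * rexp (-π * t)))
        (Ioi 1) := by
      have hbase := integrableOn_rpow_mul_exp_neg_mul_rpow (s := ((2 * n + 1 : ℕ) : ℝ))
        (lt_of_lt_of_le (by norm_num : (-1:ℝ) < 0) (Nat.cast_nonneg _)) (by norm_num : (0:ℝ) < 1) Real.pi_pos
      have : IntegrableOn (fun t : ℝ => t ^ (2 * n + 1) * rexp (-π * t)) (Ioi 0) := by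
        refine hbase.congr_fun (fun t ht => ?_) measurableSet_Ioi
        beta_reduce
        rw [Real.rpow_natCast, Real.rpow_one]
      exact ((this.mono_set (Ioi_subset_Ioi zero_le_one)).const_mul _)
    refine Integrable.mono' hg
      hmeas.aestronglyMeasurable ?_
    filter_upwards [self_mem_ae_restrict measurableSet_Ioi] with t ht
    have ht1 : (1:ℝ) ≤ t := (mem_Ioi.mp ht).le
    have hsp : 0 < Real.sinh (π * t) := Real.sinh_pos_iff.mpr (by positivity)
    have hlow : rexp (π * t) * ((1 - c) / 2) ≤ Real.sinh (π * t) := by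
      rw [Real.sinh_eq]
      have hkey : rexp (-(π * t)) ≤ rexp (π * t) * c := by
        rw [hc, ← Real.exp_add]
        apply Real.exp_le_exp.mpr
        have := Real.pi_pos; nlinarith
      nlinarith
    have hlowpos : 0 < rexp (π * t) * ((1 - c) / 2) := mul_pos (Real.exp_pos _) (by linarith)
    have hinv : (Real.sinh (π * t))⁻¹ ≤ (rexp (π * t) * ((1 - c) / 2))⁻¹ :=
      inv_anti₀ hlowpos hlow
    have hval : (rexp (π * t) * ((1 - c) / 2))⁻¹ = (2 / (1 - c)) * rexp (-π * t) := by
      rw [show -π * t = -(π * t) by ring, Real.exp_neg]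
      have : rexp (π * t) ≠ 0 := (Real.exp_pos _).ne'
      field_simp
    have hnn : 0 ≤ t ^ (2 * n + 1) * (Real.sinh (π * t))⁻¹ := by positivity
    rw [Real.norm_of_nonneg hnn]
    calc t ^ (2 * n + 1) * (Real.sinh (π * t))⁻¹
        ≤ t ^ (2 * n + 1) * ((2 / (1 - c)) * rexp (-π * t)) := by
          rw [← hval]
          exact mul_le_mul_of_nonneg_left hinv (by positivity)
      _ = (2 / (1 - c)) * (t ^ (2 * n + 1) * rexp (-π * t)) := by ring
  have := h1.union h2
  rwa [Ioc_union_Ioi_eq_Ioi zero_le_one] at this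

lemma hderiv_neg_sq : ∀ x ∈ Ioi (0:ℝ),
    HasDerivWithinAt (fun t : ℝ => -t ^ 2) (-(2 * x)) (Ioi 0) x := by
  intro x _
  have := ((hasDerivAt_pow 2 x).neg).hasDerivWithinAt (s := Ioi (0:ℝ))
  simp at this
  exact this

lemma hinj_neg_sq : InjOn (fun t : ℝ => -t ^ 2) (Ioi 0) := by
  intro a ha b hb h
  simp only at h
  have h2 : a ^ 2 = b ^ 2 := by linarith
  have ha' : (0:ℝ) < a := ha
  have hb' : (0:ℝ) < b := hb
  rw [← Real.sqrt_sq ha'.le, ← Real.sqrt_sq hb'.le, h2]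

lemma mellin_eq_integral (n : ℕ) :
    mellin Fs ((2 * n + 2 : ℕ) : ℂ) = ∫ t in Ioi (0:ℝ), (t : ℂ) ^ (2 * n + 1) * Fs t := by
  rw [mellin]
  refine setIntegral_congr_fun measurableSet_Ioi (fun t ht => ?_)
  rw [smul_eq_mul]
  congr 1
  rw [show ((2 * n + 2 : ℕ) : ℂ) - 1 = ((2 * n + 1 : ℕ) : ℂ) by push_cast; ring,
    Complex.cpow_natCast]

lemma key (n : ℕ) : (∫ x in Iio (0:ℝ), gI n x) = eta (-1 - 2 * (n : ℂ)) := by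
  rw [← image_neg_sq,
    integral_image_eq_integral_abs_deriv_smul measurableSet_Ioi hderiv_neg_sq hinj_neg_sq (gI n),
    setIntegral_congr_fun measurableSet_Ioi (eqOn_subst n), integral_const_mul,
    ← mellin_eq_integral n, mellin_Fs n]
  -- now pure special-values computation
  have hm : (-1 : ℂ) - 2 * (n : ℂ) = 1 - ((2 * n + 2 : ℕ) : ℂ) := by push_cast; ring
  have hsne : ∀ k : ℕ, ((2 * n + 2 : ℕ) : ℂ) ≠ -(k : ℂ) := by
    intro k hk
    have := congrArg Complex.re hk
    simp only [Complex.natCast_re, Complex.neg_re] at this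
    push_cast at this
    have h1 : (0:ℝ) ≤ (k : ℝ) := Nat.cast_nonneg k
    have h2 : (0:ℝ) ≤ (n : ℝ) := Nat.cast_nonneg n
    linarith
  have hs1 : ((2 * n + 2 : ℕ) : ℂ) ≠ 1 := by
    intro hk
    have := congrArg Complex.re hk
    simp only [Complex.natCast_re, Complex.one_re] at this
    push_cast at this
    have h2 : (0:ℝ) ≤ (n : ℝ) := Nat.cast_nonneg n
    linarith
  have hzeta := riemannZeta_one_sub hsne hs1
  have hcos : Complex.cos (↑π * ((2 * n + 2 : ℕ) : ℂ) / 2) = (-1 : ℂ) ^ (n + 1) := by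
    rw [show (↑π * ((2 * n + 2 : ℕ) : ℂ) / 2) = ((((n + 1 : ℕ) : ℝ) * π : ℝ) : ℂ) by
      push_cast; ring, ← Complex.ofReal_cos]
    have hr : Real.cos (((n + 1 : ℕ) : ℝ) * π) = (-1 : ℝ) ^ (n + 1) := by
      simpa using Real.cos_nat_mul_pi_sub 0 (n + 1)
    rw [hr]
    push_cast
    ring
  rw [eta, hm, hzeta, hcos]
  rw [show (1 : ℂ) - (1 - ((2 * n + 2 : ℕ) : ℂ)) = ((2 * n + 2 : ℕ) : ℂ) by ring,
    Complex.cpow_natCast, Complex.cpow_neg, Complex.cpow_natCast]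
  have hπ : ((π : ℂ)) ≠ 0 := Complex.ofReal_ne_zero.mpr Real.pi_ne_zero
  have h2 : ((2 : ℂ)) ^ (2 * n + 2) ≠ 0 := pow_ne_zero _ two_ne_zero
  field_simp
  ring

lemma integrableOn_gI (n : ℕ) : IntegrableOn (gI n) (Iio 0) := by
  rw [← image_neg_sq, integrableOn_image_iff_integrableOn_abs_deriv_smul
    measurableSet_Ioi hderiv_neg_sq hinj_neg_sq]
  refine IntegrableOn.congr_fun ?_ (eqOn_subst n).symm measurableSet_Ioi
  apply Integrable.const_mul
  have h := (integrableOn_pow_div_sinh n).ofReal (𝕜 := ℂ)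
  have h' : Integrable (fun x : ℝ => ((x ^ (2 * n + 1) * (Real.sinh (π * x))⁻¹ : ℝ) : ℂ))
      (volume.restrict (Ioi 0)) := h
  refine h'.congr (Filter.Eventually.of_forall fun t => ?_)
  simp only [Fs, Complex.ofReal_mul, Complex.ofReal_pow, Complex.ofReal_inv]

theorem stmt1 :
    (∀ j k : ℕ,
      (∫ x in Set.Iio (0 : ℝ), (x : ℂ) ^ (j + k) / (2 * Real.sinh (Real.pi * Real.sqrt (-x)))) =
        eta (-1 - 2 * (j : ℂ) - 2 * (k : ℂ))) ∧
    (∀ P₁ P₂ : Polynomial ℂ,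
      innerP P₁ P₂ =
        ∫ x in Set.Iio (0 : ℝ),
          P₁.eval (x : ℂ) * (starRingEnd ℂ) (P₂.eval (x : ℂ)) /
            (2 * Real.sinh (Real.pi * Real.sqrt (-x)))) := by
  have hkey : ∀ j k : ℕ,
      (∫ x in Set.Iio (0 : ℝ), (x : ℂ) ^ (j + k) / (2 * Real.sinh (Real.pi * Real.sqrt (-x)))) =
        eta (-1 - 2 * (j : ℂ) - 2 * (k : ℂ)) := by
    intro j k
    rw [show (-1 - 2 * (j:ℂ) - 2 * (k:ℂ)) = -1 - 2 * ((j + k : ℕ) : ℂ) by push_cast; ring]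
    exact key (j + k)
  refine ⟨hkey, ?_⟩
  intro P₁ P₂
  rw [innerP]
  have hterm : ∀ j k : ℕ,
      P₁.coeff j * (starRingEnd ℂ) (P₂.coeff k) * eta (-1 - 2 * (j : ℂ) - 2 * (k : ℂ))
        = ∫ x in Set.Iio (0:ℝ), P₁.coeff j * (starRingEnd ℂ) (P₂.coeff k) * gI (j + k) x := by
    intro j k
    rw [integral_const_mul, ← hkey j k]
    rfl
  calc ∑ j ∈ Finset.range (P₁.natDegree + 1), ∑ k ∈ Finset.range (P₂.natDegree + 1),
        P₁.coeff j * (starRingEnd ℂ) (P₂.coeff k) * eta (-1 - 2 * (j : ℂ) - 2 * (k : ℂ))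
      = ∑ j ∈ Finset.range (P₁.natDegree + 1), ∑ k ∈ Finset.range (P₂.natDegree + 1),
        ∫ x in Set.Iio (0:ℝ), P₁.coeff j * (starRingEnd ℂ) (P₂.coeff k) * gI (j + k) x := by
        exact Finset.sum_congr rfl fun j _ => Finset.sum_congr rfl fun k _ => hterm j k
    _ = ∫ x in Set.Iio (0:ℝ), ∑ j ∈ Finset.range (P₁.natDegree + 1),
          ∑ k ∈ Finset.range (P₂.natDegree + 1),
          P₁.coeff j * (starRingEnd ℂ) (P₂.coeff k) * gI (j + k) x := by
        rw [integral_finset_sum]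
        · refine Finset.sum_congr rfl fun j _ => ?_
          rw [integral_finset_sum]
          intro k _
          exact (integrableOn_gI (j + k)).const_mul _
        · intro j _
          exact integrable_finset_sum _ fun k _ => (integrableOn_gI (j + k)).const_mul _
    _ = _ := by
        refine setIntegral_congr_fun measurableSet_Iio (fun x _ => ?_)
        rw [Polynomial.eval_eq_sum_range (x := (x:ℂ)) (p := P₁),
          Polynomial.eval_eq_sum_range (x := (x:ℂ)) (p := P₂), map_sum]
        simp only [map_mul, map_pow, Complex.conj_ofReal]
        rw [div_eq_mul_inv, Finset.sum_mul_sum, Finset.sum_mul]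
        refine Finset.sum_congr rfl fun j _ => ?_
        rw [Finset.sum_mul]
        refine Finset.sum_congr rfl fun k _ => ?_
        simp only [gI, div_eq_mul_inv]
        rw [pow_add]
        ring
end

section
/- As an identity of formal power series in t₁ and conj(t₂): with the inner product on ℂ[x] defined by ⟨x^j, x^k⟩ = η(-1-2j-2k), one has ⟨cosh(√x · t₁), cosh(√x · t₂)⟩ = (1 + cosh(t₁)·cosh(conj(t₂))) / (2(cosh(t₁) + cosh(conj(t₂)))²). -/
/-- The formal power series `cosh` of variable `i` in two variables (the other
variable being `j`): `cosh(t_i) = ∑ t_i^{2n}/(2n)!`. -/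
noncomputable def coshPS (i j : Fin 2) : MvPowerSeries (Fin 2) ℂ :=
  fun d => if d j = 0 ∧ Even (d i) then ((Nat.factorial (d i) : ℂ))⁻¹ else 0

open PowerSeries
open scoped Nat

lemma eta_neg_nat (n : ℕ) : eta (-(n:ℂ)) =
    (1 - 2 ^ (n+1) : ℂ) * ((-1 : ℂ) ^ n * (bernoulli (n+1) : ℂ) / (n + 1)) := by
  rw [eta, riemannZeta_neg_nat_eq_bernoulli]
  rw [show (1 - -(n:ℂ)) = ((n+1 : ℕ) : ℂ) by push_cast; ring, Complex.cpow_natCast]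

lemma bernoulli_odd {n : ℕ} (h : Odd n) (h1 : 1 < n) : bernoulli n = 0 := by
  simp [bernoulli, bernoulli'_eq_zero_of_odd h h1]

noncomputable def hps : PowerSeries ℂ := PowerSeries.mk fun n => eta (-(n:ℂ)) / (n ! : ℂ)
noncomputable def gps : PowerSeries ℂ := PowerSeries.mk fun n => eta (-1 - (n:ℂ)) / (n ! : ℂ)

lemma stepA : (X : PowerSeries ℂ) * (1 - hps) =
    bernoulliPowerSeries ℂ - rescale 2 (bernoulliPowerSeries ℂ) := by
  ext N
  rcases N with _ | n
  · rw [coeff_zero_X_mul, map_sub, coeff_rescale, bernoulliPowerSeries, coeff_mk]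
    norm_num
  · rw [coeff_succ_X_mul, map_sub, map_sub, coeff_rescale, bernoulliPowerSeries, hps,
      coeff_mk, coeff_mk, eta_neg_nat]
    simp only [eq_ratCast, Rat.cast_div, Rat.cast_natCast, Rat.cast_ofNat]
    have hfac : ((n+1)! : ℂ) = (n+1) * (n ! : ℂ) := by
      push_cast [Nat.factorial_succ]; ring
    have hne : ((n ! : ℂ)) ≠ 0 := by exact_mod_cast Nat.factorial_ne_zero n
    have hne1 : ((n:ℂ) + 1) ≠ 0 := Nat.cast_add_one_ne_zero n
    rcases n with _ | n
    · norm_num [coeff_one, bernoulli_one]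
    · rw [PowerSeries.coeff_one, if_neg (Nat.succ_ne_zero n)]
      rcases Nat.even_or_odd n with he | ho
      · rw [Odd.neg_one_pow he.add_one, hfac]
        push_cast
        field_simp
        ring
      · have hb : bernoulli (n+2) = 0 := bernoulli_odd (by obtain ⟨k,hk⟩ := ho; exact ⟨k+1, by omega⟩) (by omega)
        rw [hb]
        norm_num


lemma rescale_two_X : rescale (2:ℂ) X = 2 * X := by
  have h2 : (2 : PowerSeries ℂ) * X = C 2 * X := by rw [map_ofNat]
  ext n
  rw [coeff_rescale, h2, coeff_C_mul]
  rcases n with _|_|n <;> simp [PowerSeries.coeff_X]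

lemma exp_sq : rescale (2:ℂ) (exp ℂ) = exp ℂ * exp ℂ := by
  have := exp_mul_exp_eq_exp_add (1:ℂ) 1
  rw [rescale_one] at this
  norm_num at this
  rw [this]

lemma Eexp_ne_one_aux : (exp ℂ - 1 : PowerSeries ℂ) ≠ 0 := by
  intro h
  have := congrArg (coeff 1) h
  simp [coeff_exp, PowerSeries.coeff_one] at this

lemma stepB : (1 - hps) * (exp ℂ + 1) = 1 := by
  have key1 : bernoulliPowerSeries ℂ * (exp ℂ - 1) = X := bernoulliPowerSeries_mul_exp_sub_one ℂ
  have key2 : rescale 2 (bernoulliPowerSeries ℂ) * (exp ℂ * exp ℂ - 1) = 2 * X := by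
    have := congrArg (rescale (2:ℂ)) key1
    rw [map_mul, map_sub, map_one, exp_sq, rescale_two_X] at this
    exact this
  have main : (X : PowerSeries ℂ) * ((1 - hps) * ((exp ℂ - 1) * (exp ℂ + 1)))
      = X * (exp ℂ - 1) := by
    linear_combination (exp ℂ * exp ℂ - 1) * stepA + (exp ℂ + 1) * key1 - key2
  have h1 := mul_left_cancel₀ (X_ne_zero : (X : PowerSeries ℂ) ≠ 0) main
  have h2 : (exp ℂ - 1) * ((1 - hps) * (exp ℂ + 1)) = (exp ℂ - 1) * 1 := by
    linear_combination h1
  exact mul_left_cancel₀ Eexp_ne_one_aux h2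


lemma deriv_hps : d⁄dX ℂ hps = gps := by
  ext n
  rw [coeff_derivative, hps, gps, coeff_mk, coeff_mk]
  have h1 : ((n+1)! : ℂ) = (n+1) * (n ! : ℂ) := by push_cast [Nat.factorial_succ]; ring
  have hne : ((n ! : ℂ)) ≠ 0 := by exact_mod_cast Nat.factorial_ne_zero n
  have hne1 : ((n:ℂ) + 1) ≠ 0 := Nat.cast_add_one_ne_zero n
  push_cast
  rw [show (-((n:ℂ)+1)) = -1 - n by ring, h1]
  field_simp

lemma exp_deriv : d⁄dX ℂ (exp ℂ) = exp ℂ := by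
  ext n
  rw [coeff_derivative, coeff_exp, coeff_exp]
  simp only [eq_ratCast]
  push_cast
  have h1 : ((n+1)! : ℂ) = (n+1) * (n ! : ℂ) := by push_cast [Nat.factorial_succ]; ring
  have hne : ((n ! : ℂ)) ≠ 0 := by exact_mod_cast Nat.factorial_ne_zero n
  have hne1 : ((n:ℂ) + 1) ≠ 0 := Nat.cast_add_one_ne_zero n
  rw [h1]
  field_simp

lemma stepE : gps * (exp ℂ + 1) ^ 2 = exp ℂ := by
  have hd := congrArg (d⁄dX ℂ) stepB
  rw [Derivation.leibniz, Derivation.map_one_eq_zero, map_sub, map_add,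
    Derivation.map_one_eq_zero, deriv_hps, exp_deriv] at hd
  simp only [smul_eq_mul] at hd
  have h1 : (1 - hps) * exp ℂ = (exp ℂ + 1) * gps := by linear_combination hd
  calc gps * (exp ℂ + 1) ^ 2 = ((exp ℂ + 1) * gps) * (exp ℂ + 1) := by ring
    _ = ((1 - hps) * exp ℂ) * (exp ℂ + 1) := by rw [h1]
    _ = exp ℂ * ((1 - hps) * (exp ℂ + 1)) := by ring
    _ = exp ℂ := by rw [stepB, mul_one]

lemma exp_mul_exp_neg : exp ℂ * rescale (-1 : ℂ) (exp ℂ) = 1 := by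
  have := exp_mul_exp_eq_exp_add (1:ℂ) (-1)
  rw [rescale_one] at this
  norm_num at this
  exact this

lemma exp_ne_zero' : (exp ℂ : PowerSeries ℂ) ≠ 0 := by
  intro h
  have := congrArg (coeff 0) h
  simp [coeff_exp] at this

lemma stepF : gps * (exp ℂ + 2 + rescale (-1 : ℂ) (exp ℂ)) = 1 := by
  have h1 : exp ℂ * (gps * (exp ℂ + 2 + rescale (-1 : ℂ) (exp ℂ))) = exp ℂ * 1 := by
    calc exp ℂ * (gps * (exp ℂ + 2 + rescale (-1 : ℂ) (exp ℂ)))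
        = gps * (exp ℂ * exp ℂ + 2 * exp ℂ + exp ℂ * rescale (-1 : ℂ) (exp ℂ)) := by ring
      _ = gps * (exp ℂ * exp ℂ + 2 * exp ℂ + 1) := by rw [exp_mul_exp_neg]
      _ = gps * (exp ℂ + 1) ^ 2 := by ring
      _ = exp ℂ := stepE
      _ = exp ℂ * 1 := (mul_one _).symm
  exact mul_left_cancel₀ exp_ne_zero' h1


noncomputable def d2 (i j : ℕ) : Fin 2 →₀ ℕ := Finsupp.single 0 i + Finsupp.single 1 j

@[simp] lemma d2_0 (i j : ℕ) : d2 i j 0 = i := by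
  simp [d2, Finsupp.single_apply]

@[simp] lemma d2_1 (i j : ℕ) : d2 i j 1 = j := by
  simp [d2, Finsupp.single_apply]

lemma d2_eta (d : Fin 2 →₀ ℕ) : d2 (d 0) (d 1) = d := by
  ext x
  fin_cases x <;> simp

lemma sum_fin2 (d : Fin 2 →₀ ℕ) (G : (Fin 2 →₀ ℕ) × (Fin 2 →₀ ℕ) → ℂ) :
    ∑ p ∈ Finset.HasAntidiagonal.antidiagonal d, G p =
    ∑ i ∈ Finset.range (d 0 + 1), ∑ j ∈ Finset.range (d 1 + 1),
      G (d2 i j, d2 (d 0 - i) (d 1 - j)) := by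
  rw [← Finset.sum_product']
  refine Finset.sum_nbij' (i := fun p => (p.1 0, p.1 1))
    (j := fun q => (d2 q.1 q.2, d2 (d 0 - q.1) (d 1 - q.2))) ?_ ?_ ?_ ?_ ?_
  · intro p hp
    rw [Finset.HasAntidiagonal.mem_antidiagonal] at hp
    have h0 : p.1 0 + p.2 0 = d 0 := by rw [← Finsupp.add_apply, hp]
    have h1 : p.1 1 + p.2 1 = d 1 := by rw [← Finsupp.add_apply, hp]
    simp only [Finset.mem_product, Finset.mem_range]
    omega
  · intro q hq
    simp only [Finset.mem_product, Finset.mem_range] at hq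
    rw [Finset.HasAntidiagonal.mem_antidiagonal]
    ext x
    fin_cases x <;> simp <;> omega
  · intro p hp
    rw [Finset.HasAntidiagonal.mem_antidiagonal] at hp
    have h0 : p.1 0 + p.2 0 = d 0 := by rw [← Finsupp.add_apply, hp]
    have h1 : p.1 1 + p.2 1 = d 1 := by rw [← Finsupp.add_apply, hp]
    have e1 : d2 (p.1 0) (p.1 1) = p.1 := d2_eta p.1
    have e2 : d2 (d 0 - p.1 0) (d 1 - p.1 1) = p.2 := by
      ext x
      fin_cases x <;> simp <;> omega
    simp [e1, e2]
  · intro q hq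
    simp
  · intro p hp
    rw [Finset.HasAntidiagonal.mem_antidiagonal] at hp
    have h0 : p.1 0 + p.2 0 = d 0 := by rw [← Finsupp.add_apply, hp]
    have h1 : p.1 1 + p.2 1 = d 1 := by rw [← Finsupp.add_apply, hp]
    have e1 : d2 (p.1 0) (p.1 1) = p.1 := d2_eta p.1
    have e2 : d2 (d 0 - p.1 0) (d 1 - p.1 1) = p.2 := by
      ext x
      fin_cases x <;> simp <;> omega
    simp [e1, e2]



noncomputable def Lsub (α β : ℂ) (f : PowerSeries ℂ) : MvPowerSeries (Fin 2) ℂ :=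
  fun d => α ^ d 0 * β ^ d 1 * ((d 0 + d 1).choose (d 0) : ℂ) *
    PowerSeries.coeff (d 0 + d 1) f

lemma coeff_Lsub (α β : ℂ) (f : PowerSeries ℂ) (d : Fin 2 →₀ ℕ) :
    MvPowerSeries.coeff d (Lsub α β f) =
      α ^ d 0 * β ^ d 1 * ((d 0 + d 1).choose (d 0) : ℂ) *
        PowerSeries.coeff (d 0 + d 1) f := rfl

lemma mv_zero_iff (d : Fin 2 →₀ ℕ) : d = 0 ↔ d 0 = 0 ∧ d 1 = 0 := by
  constructor
  · intro h; simp [h]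
  · intro ⟨h0, h1⟩; ext x; fin_cases x <;> simpa

lemma Lsub_one (α β : ℂ) : Lsub α β 1 = 1 := by
  ext d
  rw [coeff_Lsub, MvPowerSeries.coeff_one]
  by_cases h : d = 0
  · subst h; simp
  · rw [if_neg h]
    rw [mv_zero_iff] at h
    have : ¬ (d 0 + d 1 = 0) := by omega
    rw [PowerSeries.coeff_one, if_neg this]
    ring

lemma Lsub_add (α β : ℂ) (f g : PowerSeries ℂ) : Lsub α β (f + g) = Lsub α β f + Lsub α β g := by
  ext d
  rw [map_add, coeff_Lsub, coeff_Lsub, coeff_Lsub, map_add]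
  ring

lemma Lsub_rescale (α β c : ℂ) (f : PowerSeries ℂ) :
    Lsub α β (rescale c f) = Lsub (c * α) (c * β) f := by
  ext d
  rw [coeff_Lsub, coeff_Lsub, coeff_rescale]
  rw [mul_pow, mul_pow, pow_add (c) (d 0) (d 1)]
  ring

lemma Lsub_two (α β : ℂ) : Lsub α β 2 = 2 := by
  rw [show (2 : PowerSeries ℂ) = 1 + 1 by norm_num, Lsub_add, Lsub_one]
  norm_num

lemma choose_inv_fact (i j : ℕ) :
    ((i+j).choose i : ℂ) * (((i+j)! : ℂ))⁻¹ = ((i ! : ℂ))⁻¹ * ((j ! : ℂ))⁻¹ := by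
  have h := Nat.choose_mul_factorial_mul_factorial (Nat.le_add_right i j)
  rw [Nat.add_sub_cancel_left] at h
  have hc : (((i+j).choose i : ℂ)) * (i ! : ℂ) * (j ! : ℂ) = ((i+j)! : ℂ) := by
    exact_mod_cast congrArg (Nat.cast : ℕ → ℂ) h
  have h1 : ((i ! : ℂ)) ≠ 0 := by exact_mod_cast Nat.factorial_ne_zero i
  have h2 : ((j ! : ℂ)) ≠ 0 := by exact_mod_cast Nat.factorial_ne_zero j
  have h3 : (((i+j)! : ℂ)) ≠ 0 := by exact_mod_cast Nat.factorial_ne_zero (i+j)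
  field_simp
  linear_combination hc

lemma coeff_Lsub_exp (α β : ℂ) (d : Fin 2 →₀ ℕ) :
    MvPowerSeries.coeff d (Lsub α β (exp ℂ)) =
      α ^ d 0 * β ^ d 1 * (((d 0)! : ℂ)⁻¹ * ((d 1)! : ℂ)⁻¹) := by
  rw [coeff_Lsub, coeff_exp]
  simp only [eq_ratCast, one_div, Rat.cast_inv, Rat.cast_natCast]
  linear_combination (α ^ d 0 * β ^ d 1) * choose_inv_fact (d 0) (d 1)

lemma binom_sum (α α' : ℂ) (n : ℕ) :
    ∑ i ∈ Finset.range (n + 1), α ^ i * α' ^ (n - i) * ((i ! : ℂ)⁻¹ * ((n - i)! : ℂ)⁻¹)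
      = (α + α') ^ n * ((n ! : ℂ))⁻¹ := by
  rw [add_pow, Finset.sum_mul]
  apply Finset.sum_congr rfl
  intro i hi
  rw [Finset.mem_range] at hi
  have hle : i + (n - i) = n := by omega
  have e := choose_inv_fact i (n - i)
  rw [hle] at e
  rw [← e]; ring

lemma Lsub_exp_mul (α β α' β' : ℂ) :
    Lsub α β (exp ℂ) * Lsub α' β' (exp ℂ) = Lsub (α + α') (β + β') (exp ℂ) := by
  ext d
  rw [MvPowerSeries.coeff_mul, sum_fin2, coeff_Lsub_exp]
  have main : ∀ p ∈ Finset.range (d 0 + 1) ×ˢ Finset.range (d 1 + 1),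
      (MvPowerSeries.coeff (d2 p.1 p.2)) (Lsub α β (exp ℂ)) *
        (MvPowerSeries.coeff (d2 (d 0 - p.1) (d 1 - p.2))) (Lsub α' β' (exp ℂ)) =
      (α ^ p.1 * α' ^ (d 0 - p.1) * (((p.1)! : ℂ)⁻¹ * ((d 0 - p.1)! : ℂ)⁻¹)) *
        (β ^ p.2 * β' ^ (d 1 - p.2) * (((p.2)! : ℂ)⁻¹ * ((d 1 - p.2)! : ℂ)⁻¹)) := by
    intro p hp
    rw [coeff_Lsub_exp, coeff_Lsub_exp]
    simp only [d2_0, d2_1]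
    ring
  rw [← Finset.sum_product']
  rw [Finset.sum_congr rfl main, Finset.sum_product]
  dsimp only
  rw [← Finset.sum_mul_sum, binom_sum, binom_sum]
  ring



lemma vandermonde_sum (f g : PowerSeries ℂ) (n0 n1 : ℕ) :
    (((n0 + n1).choose n0 : ℂ)) * ∑ a ∈ Finset.range (n0 + n1 + 1),
        PowerSeries.coeff a f * PowerSeries.coeff (n0 + n1 - a) g
    = ∑ i ∈ Finset.range (n0 + 1), ∑ j ∈ Finset.range (n1 + 1),
        ((i+j).choose i : ℂ) * ((n0 + n1 - (i+j)).choose (n0 - i) : ℂ) *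
          (PowerSeries.coeff (i+j) f * PowerSeries.coeff (n0 + n1 - (i+j)) g) := by
  set T : ℕ → ℕ → ℂ := fun i a =>
    (a.choose i : ℂ) * ((n0 + n1 - a).choose (n0 - i) : ℂ) *
      (PowerSeries.coeff a f * PowerSeries.coeff (n0 + n1 - a) g) with hT
  have van : ∀ a ∈ Finset.range (n0 + n1 + 1),
      ((n0 + n1).choose n0 : ℂ) * (PowerSeries.coeff a f * PowerSeries.coeff (n0 + n1 - a) g)
      = ∑ i ∈ Finset.range (n0 + 1), T i a := by
    intro a ha
    rw [Finset.mem_range] at ha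
    have hv := Nat.add_choose_eq a (n0 + n1 - a) n0
    rw [show a + (n0 + n1 - a) = n0 + n1 by omega] at hv
    rw [hv, Finset.Nat.sum_antidiagonal_eq_sum_range_succ_mk]
    push_cast
    rw [Finset.sum_mul]
  rw [Finset.mul_sum, Finset.sum_congr rfl van, Finset.sum_comm]
  apply Finset.sum_congr rfl
  intro i hi
  rw [Finset.mem_range] at hi
  have hmap : ∑ j ∈ Finset.range (n1 + 1), T i (i + j)
      = ∑ a ∈ (Finset.range (n1 + 1)).map ⟨fun j => i + j, fun x y h => Nat.add_left_cancel h⟩, T i a := by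
    rw [Finset.sum_map]
    rfl
  rw [hmap]
  refine (Finset.sum_subset ?_ ?_).symm
  · intro x hx
    simp only [Finset.mem_map, Finset.mem_range, Function.Embedding.coeFn_mk] at hx
    obtain ⟨j, hj, rfl⟩ := hx
    simp only [Finset.mem_range]
    exact (show i + j < n0 + n1 + 1 by omega)
  · intro a ha hna
    rw [Finset.mem_range] at ha
    have key : ¬ (i ≤ a ∧ a ≤ i + n1) := by
      rintro ⟨u1, u2⟩
      refine hna (Finset.mem_map.mpr ⟨a - i, Finset.mem_range.mpr (by omega), ?_⟩)
      show i + (a - i) = a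
      omega
    by_cases h1 : a < i
    · simp only [hT]
      rw [Nat.choose_eq_zero_of_lt h1]
      simp
    · have h4 : n0 + n1 - a < n0 - i := by omega
      simp only [hT]
      rw [Nat.choose_eq_zero_of_lt h4]
      simp

lemma Lsub_mul (α β : ℂ) (f g : PowerSeries ℂ) : Lsub α β (f * g) = Lsub α β f * Lsub α β g := by
  ext d
  rw [MvPowerSeries.coeff_mul, sum_fin2, coeff_Lsub, PowerSeries.coeff_mul,
    Finset.Nat.sum_antidiagonal_eq_sum_range_succ_mk]
  have hRHS : ∀ i ∈ Finset.range (d 0 + 1), ∀ j ∈ Finset.range (d 1 + 1),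
      (MvPowerSeries.coeff (d2 i j)) (Lsub α β f) *
        (MvPowerSeries.coeff (d2 (d 0 - i) (d 1 - j))) (Lsub α β g)
      = α ^ d 0 * β ^ d 1 *
        (((i+j).choose i : ℂ) * ((d 0 + d 1 - (i+j)).choose (d 0 - i) : ℂ) *
          (PowerSeries.coeff (i+j) f * PowerSeries.coeff (d 0 + d 1 - (i+j)) g)) := by
    intro i hi j hj
    rw [Finset.mem_range] at hi hj
    rw [coeff_Lsub, coeff_Lsub]
    simp only [d2_0, d2_1]
    rw [show d 0 - i + (d 1 - j) = d 0 + d 1 - (i + j) by omega,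
      show α ^ d 0 = α ^ i * α ^ (d 0 - i) by rw [← pow_add]; congr 1; omega,
      show β ^ d 1 = β ^ j * β ^ (d 1 - j) by rw [← pow_add]; congr 1; omega]
    ring
  rw [Finset.sum_congr rfl (fun i hi => Finset.sum_congr rfl (fun j hj => hRHS i hi j hj))]
  simp_rw [← Finset.mul_sum]
  rw [← vandermonde_sum]
  ring


lemma Lsub_exp_zero : Lsub 0 0 (exp ℂ) = 1 := by
  ext d
  rw [coeff_Lsub, MvPowerSeries.coeff_one]
  by_cases h : d = 0
  · subst h; simp [coeff_exp]
  · rw [if_neg h]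
    have h2 : d 0 ≠ 0 ∨ d 1 ≠ 0 := by
      by_contra hc
      push_neg at hc
      exact h ((mv_zero_iff d).mpr ⟨hc.1, hc.2⟩)
    rcases h2 with h' | h' <;> rw [zero_pow h'] <;> ring



-- eta vanishes at negative even integers written as -1 - N for N odd
lemma eta_odd_vanish (N : ℕ) (h : Odd N) : eta (-1 - (N:ℂ)) = 0 := by
  obtain ⟨k, rfl⟩ := h
  have : (-1 - ((2 * k + 1 : ℕ) : ℂ)) = -2 * ((k : ℂ) + 1) := by push_cast; ring
  rw [this, eta, riemannZeta_neg_two_mul_nat_add_one, mul_zero]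

-- f1 : identification of coshPS 0 1
lemma coshA_eq : 2 * coshPS 0 1 = Lsub 1 0 (exp ℂ) + Lsub (-1) 0 (exp ℂ) := by
  ext d
  rw [map_add, coeff_Lsub, coeff_Lsub]
  rw [show (2 : MvPowerSeries (Fin 2) ℂ) = MvPowerSeries.C 2 by rw [map_ofNat]]
  rw [MvPowerSeries.coeff_C_mul]
  rw [show MvPowerSeries.coeff d (coshPS 0 1)
      = if d 1 = 0 ∧ Even (d 0) then ((d 0)! : ℂ)⁻¹ else 0 from rfl]
  rw [coeff_exp]
  simp only [eq_ratCast, one_div, Rat.cast_inv, Rat.cast_natCast, one_pow, one_mul]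
  by_cases h1 : d 1 = 0
  · rw [h1]
    simp only [pow_zero, Nat.add_zero, Nat.choose_self, mul_one, one_mul, Nat.cast_one]
    by_cases h0 : Even (d 0)
    · rw [if_pos (by simp [h0]), h0.neg_one_pow]
      ring
    · rw [if_neg (by simp [h0]), (Nat.not_even_iff_odd.mp h0).neg_one_pow]
      ring
  · rw [if_neg (by tauto), zero_pow h1]
    ring

lemma coshB_eq : 2 * coshPS 1 0 = Lsub 0 1 (exp ℂ) + Lsub 0 (-1) (exp ℂ) := by
  ext d
  rw [map_add, coeff_Lsub, coeff_Lsub]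
  rw [show (2 : MvPowerSeries (Fin 2) ℂ) = MvPowerSeries.C 2 by rw [map_ofNat]]
  rw [MvPowerSeries.coeff_C_mul]
  rw [show MvPowerSeries.coeff d (coshPS 1 0)
      = if d 0 = 0 ∧ Even (d 1) then ((d 1)! : ℂ)⁻¹ else 0 from rfl]
  rw [coeff_exp]
  simp only [eq_ratCast, one_div, Rat.cast_inv, Rat.cast_natCast, one_pow, mul_one]
  by_cases h0 : d 0 = 0
  · rw [h0]
    simp only [pow_zero, Nat.zero_add, Nat.choose_zero_right, one_mul, Nat.cast_one]
    by_cases h1 : Even (d 1)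
    · rw [if_pos (by simp [h1]), h1.neg_one_pow]
      ring
    · rw [if_neg (by simp [h1]), (Nat.not_even_iff_odd.mp h1).neg_one_pow]
      ring
  · rw [if_neg (by tauto), zero_pow h0]
    ring

noncomputable def Fser : MvPowerSeries (Fin 2) ℂ := fun d =>
  if Even (d 0) ∧ Even (d 1) then
    eta (-1 - (d 0 : ℂ) - (d 1 : ℂ)) /
      ((Nat.factorial (d 0) : ℂ) * (Nat.factorial (d 1) : ℂ))
  else 0

lemma Fser_eq : 2 * Fser = Lsub 1 1 gps + Lsub 1 (-1) gps := by
  ext d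
  rw [map_add, coeff_Lsub, coeff_Lsub]
  rw [show (2 : MvPowerSeries (Fin 2) ℂ) = MvPowerSeries.C 2 by rw [map_ofNat]]
  rw [MvPowerSeries.coeff_C_mul]
  rw [show MvPowerSeries.coeff d Fser
      = if Even (d 0) ∧ Even (d 1) then
          eta (-1 - (d 0 : ℂ) - (d 1 : ℂ)) / (((d 0)! : ℂ) * ((d 1)! : ℂ))
        else 0 from rfl]
  rw [gps, coeff_mk]
  simp only [one_pow, one_mul]
  have harg : (-1 - ((d 0 + d 1 : ℕ) : ℂ)) = -1 - (d 0 : ℂ) - (d 1 : ℂ) := by push_cast; ring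
  by_cases h1 : Even (d 1)
  · rw [h1.neg_one_pow]
    by_cases h0 : Even (d 0)
    · rw [if_pos ⟨h0, h1⟩, harg]
      have e := choose_inv_fact (d 0) (d 1)
      have hne0 : (((d 0)! : ℂ)) ≠ 0 := by exact_mod_cast Nat.factorial_ne_zero (d 0)
      have hne1 : (((d 1)! : ℂ)) ≠ 0 := by exact_mod_cast Nat.factorial_ne_zero (d 1)
      rw [div_eq_mul_inv, div_eq_mul_inv, mul_inv]
      linear_combination (-2 * eta (-1 - (d 0:ℂ) - (d 1:ℂ))) * e
    · rw [if_neg (by tauto)]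
      rw [eta_odd_vanish (d 0 + d 1) (by
        rcases h1 with ⟨k, hk⟩
        rcases Nat.not_even_iff_odd.mp h0 with ⟨m, hm⟩
        exact ⟨m + k, by omega⟩)]
      simp
  · rw [if_neg (by tauto), (Nat.not_even_iff_odd.mp h1).neg_one_pow]
    ring




section final
local notation "E" => exp ℂ

lemma transfer (a b : ℂ) : Lsub a b gps * (Lsub a b E + 2 + Lsub (-a) (-b) E) = 1 := by
  have h := congrArg (Lsub a b) stepF
  rw [Lsub_mul, Lsub_add, Lsub_add, Lsub_two, Lsub_rescale, Lsub_one] at h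
  rw [show (-1 : ℂ) * a = -a by ring, show (-1 : ℂ) * b = -b by ring] at h
  exact h

/-- The inner product `⟨cosh(√x t₁), cosh(√x t₂)⟩`, whose coefficient of
`t₁^{2k} conj(t₂)^{2m}` is `η(-1-2k-2m)/((2k)!(2m)!)`, equals
`(1 + cosh t₁ cosh conj(t₂)) / (2 (cosh t₁ + cosh conj(t₂))²)` as a formal power
series in the two variables `t₁` and `conj(t₂)`. -/
theorem stmt2 : ∀ d : Fin 2 →₀ ℕ,
    (if Even (d 0) ∧ Even (d 1) then
        eta (-1 - (d 0 : ℂ) - (d 1 : ℂ)) /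
          ((Nat.factorial (d 0) : ℂ) * (Nat.factorial (d 1) : ℂ))
      else 0) =
    MvPowerSeries.coeff d
        ((1 + coshPS 0 1 * coshPS 1 0) * (2 * (coshPS 0 1 + coshPS 1 0) ^ 2)⁻¹) := by
  set A := coshPS 0 1 with hA
  set B := coshPS 1 0 with hB
  set P := Lsub 1 0 E with hP
  set P' := Lsub (-1) 0 E with hPp
  set Q := Lsub 0 1 E with hQ
  set Q' := Lsub 0 (-1) E with hQp
  set R := Lsub 1 1 E with hR
  set R' := Lsub (-1) (-1) E with hRp
  set S := Lsub 1 (-1) E with hS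
  set S' := Lsub (-1) 1 E with hSp
  set G := Lsub 1 1 gps with hG
  set G' := Lsub 1 (-1) gps with hGp
  have g1 : G * (R + 2 + R') = 1 := by
    have := transfer 1 1; norm_num at this; exact this
  have g2 : G' * (S + 2 + S') = 1 := by
    have := transfer 1 (-1); norm_num at this; exact this
  have hPQ : P * Q = R := by have := Lsub_exp_mul 1 0 0 1; norm_num at this; exact this
  have hPQ' : P * Q' = S := by have := Lsub_exp_mul 1 0 0 (-1); norm_num at this; exact this
  have hP'Q : P' * Q = S' := by have := Lsub_exp_mul (-1) 0 0 1; norm_num at this; exact this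
  have hP'Q' : P' * Q' = R' := by have := Lsub_exp_mul (-1) 0 0 (-1); norm_num at this; exact this
  have hPP' : P * P' = 1 := by
    have := Lsub_exp_mul 1 0 (-1) 0; norm_num at this; rw [this, Lsub_exp_zero]
  have hQQ' : Q * Q' = 1 := by
    have := Lsub_exp_mul 0 1 0 (-1); norm_num at this; rw [this, Lsub_exp_zero]
  have hPP : P * P = Lsub 2 0 E := by
    have := Lsub_exp_mul 1 0 1 0; norm_num at this; exact this
  have hP'P' : P' * P' = Lsub (-2) 0 E := by
    have := Lsub_exp_mul (-1) 0 (-1) 0; norm_num at this; exact this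
  have hQQ : Q * Q = Lsub 0 2 E := by
    have := Lsub_exp_mul 0 1 0 1; norm_num at this; exact this
  have hQ'Q' : Q' * Q' = Lsub 0 (-2) E := by
    have := Lsub_exp_mul 0 (-1) 0 (-1); norm_num at this; exact this
  have hRS : R * S = Lsub 2 0 E := by
    have := Lsub_exp_mul 1 1 1 (-1); norm_num at this; exact this
  have hRS' : R * S' = Lsub 0 2 E := by
    have := Lsub_exp_mul 1 1 (-1) 1; norm_num at this; exact this
  have hR'S : R' * S = Lsub 0 (-2) E := by
    have := Lsub_exp_mul (-1) (-1) 1 (-1); norm_num at this; exact this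
  have hR'S' : R' * S' = Lsub (-2) 0 E := by
    have := Lsub_exp_mul (-1) (-1) (-1) 1; norm_num at this; exact this
  have e2 : (P+P'+Q+Q')^2 = (R+2+R')*(S+2+S') := by
    linear_combination hPP + hP'P' + hQQ + hQ'Q' + 2*hPP' + 2*hQQ' + 2*hPQ + 2*hPQ' +
      2*hP'Q + 2*hP'Q' - hRS - hRS' - hR'S - hR'S'
  have e3 : (G+G')*((R+2+R')*(S+2+S')) = (S+2+S') + (R+2+R') := by
    linear_combination (S+2+S')*g1 + (R+2+R')*g2
  have e4 : (2*A)*(2*B) = R + S + S' + R' := by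
    rw [coshA_eq, coshB_eq]
    linear_combination hPQ + hPQ' + hP'Q + hP'Q'
  have final8 : (8 : MvPowerSeries (Fin 2) ℂ) * (Fser * (2*(A+B)^2)) = 8 * (1 + A*B) := by
    calc (8 : MvPowerSeries (Fin 2) ℂ) * (Fser * (2*(A+B)^2))
        = ((2*Fser) * ((2*A+2*B)^2)) * 2 := by ring
      _ = ((G+G') * ((P+P'+Q+Q')^2)) * 2 := by
          rw [Fser_eq, coshA_eq, coshB_eq, ← hG, ← hGp, ← hP, ← hPp, ← hQ, ← hQp]; ring
      _ = ((G+G') * ((R+2+R')*(S+2+S'))) * 2 := by rw [e2]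
      _ = ((S+2+S') + (R+2+R')) * 2 := by rw [e3]
      _ = (R + S + S' + R') * 2 + 8 := by ring
      _ = ((2*A)*(2*B)) * 2 + 8 := by rw [e4]
      _ = 8 * (1 + A*B) := by ring
  have h8ne : (8 : MvPowerSeries (Fin 2) ℂ) ≠ 0 := by
    intro h
    have := congrArg (MvPowerSeries.constantCoeff) h
    rw [map_ofNat, map_zero] at this
    norm_num at this
  have mainmul : Fser * (2*(A+B)^2) = 1 + A*B := mul_left_cancel₀ h8ne final8
  have hA0 : MvPowerSeries.constantCoeff A = 1 := by
    have h : MvPowerSeries.constantCoeff A =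
        (if (0 : Fin 2 →₀ ℕ) 1 = 0 ∧ Even ((0 : Fin 2 →₀ ℕ) 0) then
          ((((0 : Fin 2 →₀ ℕ) 0).factorial : ℂ))⁻¹ else 0) := rfl
    rw [h]; simp
  have hB0 : MvPowerSeries.constantCoeff B = 1 := by
    have h : MvPowerSeries.constantCoeff B =
        (if (0 : Fin 2 →₀ ℕ) 0 = 0 ∧ Even ((0 : Fin 2 →₀ ℕ) 1) then
          ((((0 : Fin 2 →₀ ℕ) 1).factorial : ℂ))⁻¹ else 0) := rfl
    rw [h]; simp
  have hconst : MvPowerSeries.constantCoeff (2*(A+B)^2) ≠ 0 := by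
    rw [map_mul, map_pow, map_add, hA0, hB0, map_ofNat]
    norm_num
  have hF : Fser = (1 + A * B) * (2 * (A + B) ^ 2)⁻¹ :=
    (MvPowerSeries.eq_mul_inv_iff_mul_eq hconst).mpr mainmul
  intro d
  calc (if Even (d 0) ∧ Even (d 1) then
        eta (-1 - (d 0 : ℂ) - (d 1 : ℂ)) /
          ((Nat.factorial (d 0) : ℂ) * (Nat.factorial (d 1) : ℂ))
      else 0) = MvPowerSeries.coeff d Fser := rfl
    _ = _ := by rw [hF]
end final
end

section
/- Define polynomials Q_k(x) by the generating function ∑_{k=0}^∞ Q_k(x) t^k = (1/(1-t)) cosh(√x · log((1+√t)/(1-√t))). Then each Q_k is a polynomial of degree k in x with rational coefficients (only integer powers of x and t appear), Q_k(0) = 1, and the leading term of Q_k is (4x)^k/(2k)!. -/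
/-- The power series `S(t) = ∑ 2 t^m/(2m+1)`, so that
`log((1+√t)/(1-√t)) = √t · S(t)`. -/
noncomputable def Sser : PowerSeries (Polynomial ℚ) :=
  PowerSeries.mk fun m => Polynomial.C (2 / (2 * (m : ℚ) + 1))

/-- The geometric series `1/(1-t)`. -/
noncomputable def geomSer : PowerSeries (Polynomial ℚ) :=
  PowerSeries.mk fun _ => (1 : Polynomial ℚ)

/-- The `n`-th term `x^n (t·S(t)²)^n / (2n)!` in the expansion of
`cosh(√x log((1+√t)/(1-√t)))`. -/
noncomputable def coshTerm (n : ℕ) : PowerSeries (Polynomial ℚ) :=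
  PowerSeries.C
      (Polynomial.C ((Nat.factorial (2 * n) : ℚ)⁻¹) * Polynomial.X ^ n) *
    (PowerSeries.X * Sser ^ 2) ^ n

/-- The polynomial `Q_k`, the coefficient of `t^k` in
`(1/(1-t)) cosh(√x log((1+√t)/(1-√t)))`.  (Terms `coshTerm n` with `n > k`
have `t`-order greater than `k`, so the truncated sum suffices.) -/
noncomputable def Qpoly (k : ℕ) : Polynomial ℚ :=
  PowerSeries.coeff k
    (geomSer * ∑ n ∈ Finset.range (k + 1), coshTerm n)

open PowerSeries Finset

noncomputable def S0 : PowerSeries ℚ := PowerSeries.mk fun m => 2 / (2 * (m : ℚ) + 1)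

lemma Sser_eq : Sser = PowerSeries.map Polynomial.C S0 := by
  ext n; simp [Sser, S0]

noncomputable def A (n j : ℕ) : ℚ :=
  PowerSeries.coeff j ((PowerSeries.X * S0 ^ 2) ^ n)

lemma A_eq_zero {n j : ℕ} (h : j < n) : A n j = 0 := by
  have hd : (PowerSeries.X : PowerSeries ℚ) ^ n ∣ (PowerSeries.X * S0 ^ 2) ^ n :=
    pow_dvd_pow_of_dvd ⟨S0 ^ 2, rfl⟩ n
  exact PowerSeries.X_pow_dvd_iff.mp hd j h

lemma A_diag (n : ℕ) : A n n = 4 ^ n := by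
  have : ((PowerSeries.X * S0 ^ 2) ^ n : PowerSeries ℚ)
      = PowerSeries.X ^ n * (S0 ^ 2) ^ n := mul_pow _ _ n
  rw [A, this]
  have := PowerSeries.coeff_X_pow_mul ((S0 ^ 2) ^ n : PowerSeries ℚ) n 0
  rw [zero_add] at this
  rw [this, PowerSeries.coeff_zero_eq_constantCoeff, map_pow, map_pow]
  have h0 : PowerSeries.constantCoeff S0 = 2 := by
    simp [S0, PowerSeries.constantCoeff_mk]
  rw [h0]; norm_num

lemma coeff_coshTerm (n j : ℕ) :
    PowerSeries.coeff j (coshTerm n) =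
      Polynomial.C (((Nat.factorial (2 * n) : ℚ))⁻¹ * A n j) * Polynomial.X ^ n := by
  have hmap : ((PowerSeries.X * Sser ^ 2) ^ n : PowerSeries (Polynomial ℚ))
      = PowerSeries.map Polynomial.C ((PowerSeries.X * S0 ^ 2) ^ n) := by
    rw [Sser_eq, map_pow, map_mul, PowerSeries.map_X, map_pow]
  rw [coshTerm, hmap, PowerSeries.coeff_C_mul, PowerSeries.coeff_map]
  rw [A, map_mul]
  ring

lemma Qpoly_eq (k : ℕ) : Qpoly k =
    ∑ j ∈ Finset.range (k + 1), ∑ n ∈ Finset.range (k + 1),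
      Polynomial.C (((Nat.factorial (2 * n) : ℚ))⁻¹ * A n j) * Polynomial.X ^ n := by
  rw [Qpoly, PowerSeries.coeff_mul]
  rw [Finset.Nat.sum_antidiagonal_eq_sum_range_succ_mk]
  have h1 : ∀ i ∈ Finset.range (k + 1),
      PowerSeries.coeff i geomSer *
        PowerSeries.coeff (k - i)
          (∑ n ∈ Finset.range (k + 1), coshTerm n)
      = ∑ n ∈ Finset.range (k + 1),
          Polynomial.C (((Nat.factorial (2 * n) : ℚ))⁻¹ * A n (k - i)) * Polynomial.X ^ n := by
    intro i _
    rw [show PowerSeries.coeff i geomSer = 1 by simp [geomSer], one_mul,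
      map_sum]
    exact Finset.sum_congr rfl fun n _ => coeff_coshTerm n (k - i)
  rw [Finset.sum_congr rfl h1]
  have := Finset.sum_range_reflect (fun j => ∑ n ∈ Finset.range (k + 1),
      Polynomial.C (((Nat.factorial (2 * n) : ℚ))⁻¹ * A n j) * Polynomial.X ^ n) (k + 1)
  simpa using this

lemma Qpoly_coeff (k m : ℕ) : (Qpoly k).coeff m =
    if m ≤ k then ((Nat.factorial (2 * m) : ℚ))⁻¹ * ∑ j ∈ Finset.range (k + 1), A m j
    else 0 := by
  rw [Qpoly_eq, Finset.sum_comm]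
  rw [Polynomial.finset_sum_coeff]
  have : ∀ n ∈ Finset.range (k + 1),
      (∑ j ∈ Finset.range (k + 1),
        Polynomial.C (((Nat.factorial (2 * n) : ℚ))⁻¹ * A n j) * Polynomial.X ^ n).coeff m
      = if m = n then ((Nat.factorial (2 * n) : ℚ))⁻¹ * ∑ j ∈ Finset.range (k + 1), A n j
        else 0 := by
    intro n _
    rw [Polynomial.finset_sum_coeff]
    simp only [Polynomial.coeff_C_mul, Polynomial.coeff_X_pow]
    by_cases h : m = n <;> simp [h, Finset.mul_sum]
  rw [Finset.sum_congr rfl this, Finset.sum_ite_eq (Finset.range (k+1)) m]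
  simp [Nat.lt_succ_iff]

theorem stmt4 (k : ℕ) :
    (Qpoly k).natDegree = k ∧ (Qpoly k).eval 0 = 1 ∧
      (Qpoly k).coeff k = 4 ^ k / (Nat.factorial (2 * k) : ℚ) := by
  have hck : (Qpoly k).coeff k = 4 ^ k / (Nat.factorial (2 * k) : ℚ) := by
    rw [Qpoly_coeff, if_pos le_rfl]
    have hsum : ∑ j ∈ Finset.range (k + 1), A k j = A k k := by
      rw [Finset.sum_range_succ]
      rw [Finset.sum_eq_zero fun j hj => A_eq_zero (Finset.mem_range.mp hj), zero_add]
    rw [hsum, A_diag]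
    field_simp
  refine ⟨?_, ?_, hck⟩
  · have hne : (Qpoly k).coeff k ≠ 0 := by
      rw [hck]
      positivity
    have h1 : (Qpoly k).natDegree ≤ k := by
      apply Polynomial.natDegree_le_iff_coeff_eq_zero.mpr
      intro m hm
      rw [Qpoly_coeff, if_neg (by omega)]
    exact le_antisymm h1 (Polynomial.le_natDegree_of_ne_zero hne)
  · rw [← Polynomial.coeff_zero_eq_eval_zero]
    rw [Qpoly_coeff, if_pos (Nat.zero_le k)]
    have : ∀ j, A 0 j = if j = 0 then 1 else 0 := by
      intro j
      simp [A, PowerSeries.coeff_one]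
    simp only [this]
    rw [Finset.sum_ite_eq' (Finset.range (k+1)) 0]
    simp [Nat.factorial]
end

section
/- The polynomials Q_k defined by ∑_k Q_k(x) t^k = (1/(1-t)) cosh(√x log((1+√t)/(1-√t))) satisfy the three-term recursion (2k+1 + 2x/(2k+1)) Q_k(x) = (k+1) Q_{k+1}(x) + k Q_{k-1}(x) for all k ≥ 0, with Q_{-1} := 0. -/
open PowerSeries

namespace Stmt5Aux

abbrev R := Polynomial ℚ
noncomputable abbrev cc (q : ℚ) : PowerSeries R := PowerSeries.C (Polynomial.C q)
noncomputable abbrev xx : PowerSeries R := PowerSeries.C Polynomial.X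
noncomputable abbrev Pser : PowerSeries R := PowerSeries.X * Sser ^ 2

noncomputable def sinhTerm (n : ℕ) : PowerSeries R :=
  PowerSeries.C
      (Polynomial.C ((Nat.factorial (2 * n + 1) : ℚ)⁻¹) * Polynomial.X ^ n) * Pser ^ n
noncomputable def CserK (K : ℕ) : PowerSeries R := ∑ n ∈ Finset.range K, coshTerm n
noncomputable def BserK (K : ℕ) : PowerSeries R := ∑ n ∈ Finset.range K, sinhTerm n

/-! ### basic facts -/

lemma dFun_C (r : R) : (PowerSeries.C r : PowerSeries R).derivativeFun = 0 := derivative_C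

lemma coeff_dFun (f : PowerSeries R) (n : ℕ) :
    PowerSeries.coeff n f.derivativeFun = PowerSeries.coeff (n + 1) f * (n + 1) :=
  coeff_derivative f n

lemma cc_zero : cc (0:ℚ) = 0 := by
  show PowerSeries.C (Polynomial.C 0) = 0
  rw [Polynomial.C_0, map_zero]

lemma cast_ps (m : ℕ) : ((m : ℕ) : PowerSeries R) = cc ((m : ℕ) : ℚ) := by
  have h1 : PowerSeries.C ((m:ℕ) : R) = ((m:ℕ) : PowerSeries R) := map_natCast _ m
  have h2 : Polynomial.C ((m:ℕ) : ℚ) = ((m:ℕ) : R) := map_natCast _ m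
  rw [← h1]
  exact congrArg (PowerSeries.C (R := R)) h2.symm

lemma geom_inv : (1 - PowerSeries.X) * geomSer = 1 := by
  ext1 k
  rw [sub_mul, one_mul, map_sub]
  cases k with
  | zero => simp [geomSer, PowerSeries.coeff_zero_X_mul]
  | succ n => simp [geomSer, PowerSeries.coeff_succ_X_mul, PowerSeries.coeff_one]

/-! ### derivative toolkit -/

lemma D_zero : (0 : PowerSeries R).derivativeFun = 0 := by
  have := dFun_C 0
  simpa using this

lemma D_sum {α : Type} (s : Finset α) (f : α → PowerSeries R) :
    (∑ i ∈ s, f i).derivativeFun = ∑ i ∈ s, (f i).derivativeFun := by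
  classical
  induction s using Finset.induction_on with
  | empty => simpa using D_zero
  | insert _ _ h ih => rw [Finset.sum_insert h, Finset.sum_insert h, derivativeFun_add, ih]

lemma D_mul (f g : PowerSeries R) :
    (f * g).derivativeFun = f * g.derivativeFun + g * f.derivativeFun := by
  rw [derivativeFun_mul, smul_eq_mul, smul_eq_mul]

lemma D_pow (P : PowerSeries R) (n : ℕ) :
    (P ^ n).derivativeFun = (n : PowerSeries R) * P ^ (n-1) * P.derivativeFun := by
  induction n with
  | zero => simpa using derivativeFun_one
  | succ n ih =>
    rw [pow_succ, D_mul, ih]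
    cases n with
    | zero => simp
    | succ m =>
      push_cast
      rw [pow_succ]
      ring

/-! ### the two basic ODEs -/

lemma S_odeF : Sser + cc 2 * (PowerSeries.X * Sser.derivativeFun) = cc 2 * geomSer := by
  ext1 k
  cases k with
  | zero => simp [Sser, geomSer, PowerSeries.coeff_zero_X_mul, coeff_C_mul]
  | succ n =>
    rw [map_add, coeff_C_mul, coeff_C_mul, PowerSeries.coeff_succ_X_mul, coeff_dFun]
    simp only [Sser, geomSer, coeff_mk]
    rw [mul_one]
    have e : ((n:R) + 1) = Polynomial.C ((n:ℚ)+1) := by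
      rw [map_add, Polynomial.C_eq_natCast, Polynomial.C_1]
    rw [e, ← Polynomial.C_mul, ← Polynomial.C_mul, ← Polynomial.C_add]
    congr 1
    have h : (2 * ((n:ℚ)+1) + 1) ≠ 0 := by positivity
    push_cast
    field_simp
    ring

lemma S_ode_full :
    (1 - PowerSeries.X) * (Sser + cc 2 * (PowerSeries.X * Sser.derivativeFun)) = cc 2 := by
  rw [S_odeF, mul_left_comm, geom_inv, mul_one]

def Hq (k : ℕ) : ℚ := ∑ a ∈ Finset.range (k+1), (2*(a:ℚ)+1)⁻¹

lemma coeff_S_sq (k : ℕ) :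
    PowerSeries.coeff k (Sser^2) = Polynomial.C (4 * ((k:ℚ)+1)⁻¹ * Hq k) := by
  rw [sq, PowerSeries.coeff_mul, Finset.Nat.sum_antidiagonal_eq_sum_range_succ_mk]
  simp only [Sser, coeff_mk, ← Polynomial.C_mul]
  rw [← map_sum]
  congr 1
  have hsum : ∀ i ∈ Finset.range (k+1),
      2 / (2*(i:ℚ)+1) * (2 / (2*((k-i : ℕ):ℚ)+1)) =
      2 * ((k:ℚ)+1)⁻¹ * (2*(i:ℚ)+1)⁻¹ + 2 * ((k:ℚ)+1)⁻¹ * (2*((k-i : ℕ):ℚ)+1)⁻¹ := by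
    intro i hi
    have hik : i ≤ k := Nat.lt_succ_iff.mp (Finset.mem_range.mp hi)
    have hc : ((k-i : ℕ):ℚ) = (k:ℚ) - (i:ℚ) := by
      push_cast [hik]; ring
    rw [hc]
    have h1 : (2*(i:ℚ)+1) ≠ 0 := by positivity
    have h2 : (2*((k:ℚ)-(i:ℚ))+1) ≠ 0 := by
      have : (i:ℚ) ≤ (k:ℚ) := by exact_mod_cast hik
      nlinarith
    have h3 : ((k:ℚ)+1) ≠ 0 := by positivity
    field_simp
    ring
  rw [Finset.sum_congr rfl hsum, Finset.sum_add_distrib]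
  have hrefl : ∑ i ∈ Finset.range (k+1), 2 * ((k:ℚ)+1)⁻¹ * (2*((k-i : ℕ):ℚ)+1)⁻¹ =
      ∑ i ∈ Finset.range (k+1), 2 * ((k:ℚ)+1)⁻¹ * (2*(i:ℚ)+1)⁻¹ := by
    rw [← Finset.sum_range_reflect]
    apply Finset.sum_congr rfl
    intro i hi
    have h : k - (k + 1 - 1 - i) = i := by
      have := Finset.mem_range.mp hi; omega
    rw [h]
  rw [hrefl, ← Finset.sum_add_distrib]
  rw [Hq, Finset.mul_sum]
  apply Finset.sum_congr rfl
  intro i hi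
  ring

lemma P_ode : (1 - PowerSeries.X) * (PowerSeries.X * Sser^2).derivativeFun = cc 2 * Sser := by
  ext1 k
  rw [sub_mul, one_mul, map_sub, coeff_C_mul, coeff_dFun,
    PowerSeries.coeff_succ_X_mul, coeff_S_sq]
  cases k with
  | zero =>
    rw [PowerSeries.coeff_zero_X_mul, sub_zero]
    norm_num [Hq, Sser, ← Polynomial.C_mul]
  | succ n =>
    rw [PowerSeries.coeff_succ_X_mul, coeff_dFun, PowerSeries.coeff_succ_X_mul,
      coeff_S_sq]
    simp only [Sser, coeff_mk]
    have e1 : ((n:R) + 1 + 1) = Polynomial.C ((n:ℚ)+2) := by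
      rw [show ((n:ℚ)+2) = (n:ℚ)+1+1 by ring, map_add, map_add, Polynomial.C_eq_natCast,
        Polynomial.C_1]
    have e2 : ((n:R) + 1) = Polynomial.C ((n:ℚ)+1) := by
      rw [map_add, Polynomial.C_eq_natCast, Polynomial.C_1]
    push_cast
    rw [e1, e2, ← Polynomial.C_mul, ← Polynomial.C_mul, ← Polynomial.C_sub, ← Polynomial.C_mul]
    congr 1
    have hH : Hq (n+1) = Hq n + (2*((n:ℚ)+1)+1)⁻¹ := by
      rw [Hq, Hq, Finset.sum_range_succ]
      push_cast
      ring_nf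
    rw [hH]
    have h1 : ((n:ℚ)+1) ≠ 0 := by positivity
    have h2 : ((n:ℚ)+2) ≠ 0 := by positivity
    have h3 : (2*((n:ℚ)+1)+1) ≠ 0 := by positivity
  -- (cast already normalized)
    field_simp
    ring

/-! ### factorial identities -/

lemma keyfac (m : ℕ) :
    ((Nat.factorial (2*(m+1)) : ℚ))⁻¹ * (((m:ℚ)+1) * 2) = ((Nat.factorial (2*m+1) : ℚ))⁻¹ := by
  have h1 : 2*(m+1) = (2*m+1)+1 := by ring
  rw [h1, Nat.factorial_succ]
  have h3 : ((Nat.factorial (2*m+1) : ℚ)) ≠ 0 := by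
    exact_mod_cast (Nat.factorial_pos (2*m+1)).ne'
  push_cast
  rw [mul_inv]
  have h4 : (2*(m:ℚ)+1+1)⁻¹ * (((m:ℚ)+1)*2) = 1 := by
    have : (2*(m:ℚ)+1+1) ≠ 0 := by positivity
    field_simp
    ring
  calc (2*(m:ℚ)+1+1)⁻¹ * (↑(2*m+1).factorial)⁻¹ * (((m:ℚ)+1)*2)
      = (↑(2*m+1).factorial)⁻¹ * ((2*(m:ℚ)+1+1)⁻¹ * (((m:ℚ)+1)*2)) := by ring
    _ = (↑(2*m+1).factorial)⁻¹ := by rw [h4, mul_one]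

lemma keyfac2 (n : ℕ) :
    2 * ((Nat.factorial (2*n+1) : ℚ))⁻¹ + 4 * ((n:ℕ):ℚ) * ((Nat.factorial (2*n+1) : ℚ))⁻¹ =
      2 * ((Nat.factorial (2*n) : ℚ))⁻¹ := by
  rw [Nat.factorial_succ]
  have h3 : ((Nat.factorial (2*n) : ℚ)) ≠ 0 := by
    exact_mod_cast (Nat.factorial_pos (2*n)).ne'
  have h2 : ((2*n+1 : ℕ) : ℚ) ≠ 0 := by positivity
  push_cast at h2 ⊢
  rw [mul_inv]
  have h4 : (2*(n:ℚ)+1)⁻¹ * (2 + 4*(n:ℚ)) = 2 := by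
    have : (2*(n:ℚ)+1) ≠ 0 := by positivity
    field_simp
    ring
  calc 2 * ((2*(n:ℚ)+1)⁻¹ * (↑(2*n).factorial)⁻¹) + 4*(n:ℚ) * ((2*(n:ℚ)+1)⁻¹ * (↑(2*n).factorial)⁻¹)
      = (↑(2*n).factorial)⁻¹ * ((2*(n:ℚ)+1)⁻¹ * (2 + 4*(n:ℚ))) := by ring
    _ = 2 * (↑(2*n).factorial)⁻¹ := by rw [h4]; ring

/-! ### the two truncated ODEs -/

lemma deriv_term (n : ℕ) : (1 - PowerSeries.X) * (coshTerm n).derivativeFun =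
    PowerSeries.C (Polynomial.C ((Nat.factorial (2 * n) : ℚ)⁻¹) * Polynomial.X ^ n) *
      ((n : PowerSeries R) * Pser ^ (n-1) * (cc 2 * Sser)) := by
  rw [coshTerm, D_mul, dFun_C, mul_zero, add_zero, D_pow]
  linear_combination (PowerSeries.C (Polynomial.C ((Nat.factorial (2 * n) : ℚ)⁻¹) *
    Polynomial.X ^ n) * (n : PowerSeries R) * Pser^(n-1)) * P_ode

lemma key1 (m : ℕ) :
    PowerSeries.C (Polynomial.C ((Nat.factorial (2 * (m+1)) : ℚ)⁻¹) * Polynomial.X ^ (m+1)) *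
      (((m+1 : ℕ) : PowerSeries R) * Pser ^ (m+1-1) * (cc 2 * Sser)) =
    xx * (Sser * sinhTerm m) := by
  rw [sinhTerm, cast_ps (m+1), map_mul, map_mul, map_pow, map_pow]
  have hq : Polynomial.C ((Nat.factorial (2*(m+1)) : ℚ)⁻¹) * Polynomial.C (((m+1:ℕ):ℚ)) *
      Polynomial.C (2:ℚ) = Polynomial.C ((Nat.factorial (2*m+1) : ℚ)⁻¹) := by
    rw [← Polynomial.C_mul, ← Polynomial.C_mul]
    congr 1
    rw [← keyfac m]
    push_cast
    ring
  have hq2 := congrArg (PowerSeries.C (R := R)) hq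
  rw [map_mul, map_mul] at hq2
  simp only [Nat.add_sub_cancel]
  linear_combination (xx^(m+1) * Pser^m * Sser) * hq2

lemma ode1 (K : ℕ) : (1 - PowerSeries.X) * (CserK (K+1)).derivativeFun =
    xx * (Sser * BserK K) := by
  rw [CserK, D_sum, Finset.mul_sum, Finset.sum_range_succ']
  have h0 : (1 - PowerSeries.X) * (coshTerm 0).derivativeFun = 0 := by
    rw [deriv_term 0]
    push_cast
    ring
  rw [h0, add_zero, BserK, Finset.mul_sum, Finset.mul_sum]
  apply Finset.sum_congr rfl
  intro i _
  rw [deriv_term (i+1), ← key1 i]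

lemma term2 (n : ℕ) :
    (1 - PowerSeries.X) * (Sser * sinhTerm n +
      cc 2 * (PowerSeries.X * (Sser * sinhTerm n).derivativeFun)) = cc 2 * coshTerm n := by
  rw [sinhTerm, coshTerm, D_mul, D_mul, dFun_C, mul_zero, add_zero, D_pow, cast_ps n]
  have hq : cc 2 * cc ((Nat.factorial (2*n+1) : ℚ)⁻¹) +
      cc 2 * cc 2 * cc ((n:ℕ):ℚ) * cc ((Nat.factorial (2*n+1) : ℚ)⁻¹) =
      cc 2 * cc ((Nat.factorial (2*n) : ℚ)⁻¹) := by
    simp only [← map_mul, ← map_add, ← Polynomial.C_mul, ← Polynomial.C_add]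
    exact congrArg _ (congrArg _ (by linear_combination keyfac2 n))
  simp only [map_mul, map_pow]
  cases n with
  | zero =>
    simp only [Nat.cast_zero, cc_zero, map_zero, zero_mul, mul_zero, add_zero, pow_zero,
      mul_one] at hq ⊢
    linear_combination (cc ((Nat.factorial (2*0+1) : ℚ)⁻¹)) * S_ode_full + hq
  | succ m =>
    simp only [Nat.add_sub_cancel]
    linear_combination (Pser^(m+1) * cc ((Nat.factorial (2*(m+1)+1) : ℚ)⁻¹) * xx^(m+1)) *
        S_ode_full +
      (cc 2 * PowerSeries.X * Sser * cc ((Nat.factorial (2*(m+1)+1) : ℚ)⁻¹) * xx^(m+1) *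
        cc (((m+1:ℕ)):ℚ) * Pser^m) * P_ode + (Pser^(m+1) * xx^(m+1)) * hq

lemma ode2 (K : ℕ) :
    (1 - PowerSeries.X) * (Sser * BserK K +
      cc 2 * (PowerSeries.X * (Sser * BserK K).derivativeFun)) = cc 2 * CserK K := by
  rw [BserK, CserK, Finset.mul_sum, D_sum]
  rw [Finset.mul_sum, Finset.mul_sum, ← Finset.sum_add_distrib, Finset.mul_sum, Finset.mul_sum]
  exact Finset.sum_congr rfl fun n _ => term2 n

/-! ### coefficient extraction -/

noncomputable def cpoly (k : ℕ) : R := PowerSeries.coeff k (CserK (k+1))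
noncomputable def gpoly (k : ℕ) : R := PowerSeries.coeff k (Sser * BserK (k+1))

lemma coeff_coshTerm_eq_zero {k n : ℕ} (h : k < n) : PowerSeries.coeff k (coshTerm n) = 0 := by
  have hdvd : (PowerSeries.X : PowerSeries R)^n ∣ coshTerm n :=
    ⟨PowerSeries.C (Polynomial.C ((Nat.factorial (2 * n) : ℚ)⁻¹) * Polynomial.X ^ n) *
      (Sser^2)^n, by rw [coshTerm, mul_pow]; ring⟩
  exact PowerSeries.X_pow_dvd_iff.mp hdvd k h

lemma coeff_SsinhTerm_eq_zero {k n : ℕ} (h : k < n) :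
    PowerSeries.coeff k (Sser * sinhTerm n) = 0 := by
  have hdvd : (PowerSeries.X : PowerSeries R)^n ∣ Sser * sinhTerm n :=
    ⟨Sser * (PowerSeries.C (Polynomial.C ((Nat.factorial (2 * n + 1) : ℚ)⁻¹) *
      Polynomial.X ^ n) * (Sser^2)^n), by rw [sinhTerm, mul_pow]; ring⟩
  exact PowerSeries.X_pow_dvd_iff.mp hdvd k h

lemma cstab {k K : ℕ} (h : k < K) : PowerSeries.coeff k (CserK K) = cpoly k := by
  rw [CserK, cpoly, CserK, map_sum, map_sum]
  exact (Finset.sum_subset (Finset.range_subset_range.mpr h) (fun x _ hnx =>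
    coeff_coshTerm_eq_zero (by simpa using hnx))).symm

lemma gstab {k K : ℕ} (h : k < K) : PowerSeries.coeff k (Sser * BserK K) = gpoly k := by
  rw [BserK, gpoly, BserK, Finset.mul_sum, Finset.mul_sum, map_sum, map_sum]
  exact (Finset.sum_subset (Finset.range_subset_range.mpr h) (fun x _ hnx =>
    coeff_SsinhTerm_eq_zero (by simpa using hnx))).symm

lemma Qsum (k : ℕ) : Qpoly k = ∑ j ∈ Finset.range (k+1), cpoly j := by
  rw [Qpoly, show (∑ n ∈ Finset.range (k+1), coshTerm n) = CserK (k+1) from rfl,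
    PowerSeries.coeff_mul, Finset.Nat.sum_antidiagonal_eq_sum_range_succ_mk]
  simp only [geomSer, coeff_mk, one_mul]
  rw [← Finset.sum_range_reflect]
  apply Finset.sum_congr rfl
  intro i hi
  have h1 : k - (k + 1 - 1 - i) = i := by
    have := Finset.mem_range.mp hi; omega
  rw [h1]
  exact cstab (Nat.lt_succ_iff.mpr (Nat.lt_succ_iff.mp (Finset.mem_range.mp hi)))

lemma coeffXD (f : PowerSeries R) (k : ℕ) :
    PowerSeries.coeff k (PowerSeries.X * f.derivativeFun) =
      PowerSeries.coeff k f * ((k:ℕ) : R) := by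
  cases k with
  | zero => rw [PowerSeries.coeff_zero_X_mul]; simp
  | succ j =>
    rw [PowerSeries.coeff_succ_X_mul, coeff_dFun]
    push_cast
    ring

lemma rec1 (k : ℕ) :
    cpoly (k+1) * Polynomial.C ((k:ℚ)+1) - cpoly k * Polynomial.C (k:ℚ) =
      Polynomial.X * gpoly k := by
  have h := congrArg (PowerSeries.coeff (R := R) k) (ode1 (k+1))
  rw [sub_mul, one_mul, map_sub, coeff_dFun, coeffXD, coeff_C_mul,
    cstab (show k+1 < k+2 by omega), cstab (show k < k+2 by omega)] at h
  rw [show PowerSeries.coeff k (Sser * BserK (k+1)) = gpoly k from rfl] at h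
  have e1 : ((k:R) + 1) = Polynomial.C ((k:ℚ)+1) := by
    rw [map_add, Polynomial.C_eq_natCast, Polynomial.C_1]
  have e2 : ((k:ℕ):R) = Polynomial.C ((k:ℚ)) := (Polynomial.C_eq_natCast k).symm
  rw [e1, e2] at h
  exact h

lemma rec2a : gpoly 0 = Polynomial.C 2 * cpoly 0 := by
  have h := congrArg (PowerSeries.coeff (R := R) 0) (ode2 1)
  rw [sub_mul, one_mul, map_sub, PowerSeries.coeff_zero_X_mul, sub_zero, map_add,
    coeff_C_mul, coeffXD, coeff_C_mul] at h
  rw [show PowerSeries.coeff 0 (Sser * BserK 1) = gpoly 0 from rfl,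
    show PowerSeries.coeff 0 (CserK 1) = cpoly 0 from rfl] at h
  simpa using h

lemma rec2b (k : ℕ) :
    gpoly (k+1) * Polynomial.C (2*((k:ℚ)+1)+1) - gpoly k * Polynomial.C (2*(k:ℚ)+1) =
      Polynomial.C 2 * cpoly (k+1) := by
  have h := congrArg (PowerSeries.coeff (R := R) (k+1)) (ode2 (k+2))
  rw [sub_mul, one_mul, map_sub, PowerSeries.coeff_succ_X_mul, map_add, map_add,
    coeff_C_mul, coeff_C_mul, coeffXD, coeffXD, coeff_C_mul,
    gstab (show k+1 < k+2 by omega), gstab (show k < k+2 by omega),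
    cstab (show k+1 < k+2 by omega)] at h
  simp only [Polynomial.C_add, Polynomial.C_mul, Polynomial.C_1, map_ofNat,
    Polynomial.C_eq_natCast, Nat.cast_add, Nat.cast_one, Nat.cast_ofNat] at h ⊢
  -- (cast already normalized)
  linear_combination h

lemma sumg (k : ℕ) : gpoly k * Polynomial.C (2*(k:ℚ)+1) =
    Polynomial.C 2 * ∑ j ∈ Finset.range (k+1), cpoly j := by
  induction k with
  | zero => simpa using rec2a
  | succ j ih =>
    rw [Finset.sum_range_succ, mul_add, ← ih]
    push_cast
    linear_combination rec2b j

lemma hQg (k : ℕ) : gpoly k * Polynomial.C (2*(k:ℚ)+1) = Polynomial.C 2 * Qpoly k := by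
  rw [Qsum]; exact sumg k

lemma hgQ (k : ℕ) : gpoly k = Polynomial.C (2/(2*(k:ℚ)+1)) * Qpoly k := by
  have h5 : (2*(k:ℚ)+1) ≠ 0 := by positivity
  have h6 : Polynomial.C (2*(k:ℚ)+1) * Polynomial.C ((2*(k:ℚ)+1)⁻¹) = 1 := by
    rw [← Polynomial.C_mul, mul_inv_cancel₀ h5, Polynomial.C_1]
  have h7 : Polynomial.C (2:ℚ) * Polynomial.C ((2*(k:ℚ)+1)⁻¹) =
      Polynomial.C (2/(2*(k:ℚ)+1)) := by
    rw [← Polynomial.C_mul, div_eq_mul_inv]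
  calc gpoly k = gpoly k * (Polynomial.C (2*(k:ℚ)+1) * Polynomial.C ((2*(k:ℚ)+1)⁻¹)) := by
        rw [h6, mul_one]
    _ = (gpoly k * Polynomial.C (2*(k:ℚ)+1)) * Polynomial.C ((2*(k:ℚ)+1)⁻¹) := by ring
    _ = (Polynomial.C 2 * Qpoly k) * Polynomial.C ((2*(k:ℚ)+1)⁻¹) := by rw [hQg]
    _ = (Polynomial.C (2:ℚ) * Polynomial.C ((2*(k:ℚ)+1)⁻¹)) * Qpoly k := by ring
    _ = Polynomial.C (2/(2*(k:ℚ)+1)) * Qpoly k := by rw [h7]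

end Stmt5Aux

/-- Three-term recursion for the polynomials `Q_k`, with the convention
`Q_{-1} = 0` (the `k = 0` case has vanishing coefficient in front of `Q_{k-1}`). -/
theorem stmt5 (k : ℕ) :
    (Polynomial.C (2 * (k : ℚ) + 1) + Polynomial.C (2 / (2 * (k : ℚ) + 1)) * Polynomial.X) *
        Qpoly k =
      ((k : ℚ) + 1) • Qpoly (k + 1) + (k : ℚ) • Qpoly (k - 1) := by
  open Stmt5Aux in
  rcases k with _ | j
  · have hQ1 : Qpoly 1 = Qpoly 0 + cpoly 1 := by
      rw [Qsum 1, Qsum 0, Finset.sum_range_succ]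
    have hr := rec1 0
    have hg := rec2a
    have hq0 : Qpoly 0 = cpoly 0 := by
      rw [Qsum 0, Finset.sum_range_one]
    rw [Polynomial.smul_eq_C_mul, Polynomial.smul_eq_C_mul]
    norm_num at hr ⊢
    linear_combination -hQ1 - hr - Polynomial.X * hg +
      Polynomial.C (2:ℚ) * Polynomial.X * hq0
  · have hQ1 : Qpoly (j+1+1) = Qpoly (j+1) + cpoly (j+1+1) := by
      rw [Qsum (j+1+1), Qsum (j+1), Finset.sum_range_succ]
    have hQm : Qpoly (j+1) = Qpoly j + cpoly (j+1) := by
      rw [Qsum (j+1), Qsum j, Finset.sum_range_succ]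
    have hr := rec1 (j+1)
    have hg := hgQ (j+1)
    rw [Polynomial.smul_eq_C_mul, Polynomial.smul_eq_C_mul, Nat.add_sub_cancel]
    simp only [Polynomial.C_add, Polynomial.C_mul, Polynomial.C_1, map_ofNat,
      Polynomial.C_eq_natCast, Nat.cast_add, Nat.cast_one, Nat.cast_ofNat] at hr hg ⊢
    -- (casts already normalized)
    linear_combination (-((j:Polynomial ℚ)+1+1)) * hQ1 + ((j:Polynomial ℚ)+1) * hQm - hr -
      Polynomial.X * hg
end

section
/- For complex s with Re(s) < 2, as an identity of formal power series in u: ∑_{k=0}^∞ (u^{2k}/(2k)!) η(s-2k) = η(s) + 2π^{s-1} sin(πs/2) ∫₀^∞ sin²(ux/(2π)) x^{-s}/sinh(x) dx, where on the right side each coefficient of u^{2k} (k ≥ 1) is given by the convergent integral. -/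
open MeasureTheory
open Set Filter
set_option maxHeartbeats 1000000

open Complex in
lemma oddZetaSum {a : ℂ} (ha : 1 < a.re) :
    ∑' n : ℕ, 1 / ((2 * n + 1 : ℕ) : ℂ) ^ a = (1 - 2 ^ (-a)) * riemannZeta a := by
  have hf : Summable fun n : ℕ => 1 / (n : ℂ) ^ a :=
    Complex.summable_one_div_nat_cpow.mpr ha
  have he : Summable fun n : ℕ => 1 / ((2 * n : ℕ) : ℂ) ^ a := by
    have := hf.comp_injective
      (fun x y h => by dsimp only at h; omega : Function.Injective fun n : ℕ => 2 * n)
    simpa [Function.comp_def] using this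
  have ho : Summable fun n : ℕ => 1 / ((2 * n + 1 : ℕ) : ℂ) ^ a := by
    have := hf.comp_injective
      (fun x y h => by dsimp only at h; omega : Function.Injective fun n : ℕ => 2 * n + 1)
    simpa [Function.comp_def] using this
  have hsplit := tsum_even_add_odd (f := fun n : ℕ => 1 / (n : ℂ) ^ a) he ho
  have heval : ∑' n : ℕ, 1 / ((2 * n : ℕ) : ℂ) ^ a = 2 ^ (-a) * riemannZeta a := by
    have h2 : ∀ n : ℕ, (1 : ℂ) / ((2 * n : ℕ) : ℂ) ^ a = 2 ^ (-a) * (1 / (n : ℂ) ^ a) := by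
      intro n
      have hb : ((2 * n : ℕ) : ℂ) = ((2 : ℝ) : ℂ) * ((n : ℝ) : ℂ) := by push_cast; ring
      rw [hb, mul_cpow_ofReal_nonneg (by norm_num) (Nat.cast_nonneg n), cpow_neg]
      push_cast
      rw [one_div, mul_inv, one_div]
    rw [tsum_congr h2, tsum_mul_left, ← zeta_eq_tsum_one_div_nat_cpow ha]
  rw [heval, ← zeta_eq_tsum_one_div_nat_cpow ha] at hsplit
  linear_combination hsplit

lemma sinh_hasSum {x : ℝ} (hx : 0 < x) :
    HasSum (fun n : ℕ => 2 * Real.exp (-(2 * n + 1) * x)) (Real.sinh x)⁻¹ := by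
  have hr : Real.exp (-(2 * x)) < 1 := Real.exp_lt_one_iff.mpr (by linarith)
  have h := (hasSum_geometric_of_lt_one (Real.exp_nonneg _) hr).mul_left (2 * Real.exp (-x))
  have hterm : ∀ n : ℕ, 2 * Real.exp (-x) * Real.exp (-(2 * x)) ^ n
      = 2 * Real.exp (-(2 * n + 1) * x) := by
    intro n
    rw [← Real.exp_nat_mul, mul_assoc, ← Real.exp_add]
    congr 2
    ring
  have hval : 2 * Real.exp (-x) * (1 - Real.exp (-(2 * x)))⁻¹ = (Real.sinh x)⁻¹ := by
    have e1 : Real.exp (-(2 * x)) = Real.exp (-x) * Real.exp (-x) := by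
      rw [← Real.exp_add]; ring_nf
    have e2 : Real.exp (-x) * Real.exp x = 1 := by rw [← Real.exp_add]; simp
    have h0 : (1 : ℝ) - Real.exp (-(2 * x)) ≠ 0 := sub_ne_zero.mpr hr.ne'
    have hsinh : Real.sinh x ≠ 0 := (Real.sinh_pos_iff.mpr hx).ne'
    have key : Real.sinh x * (2 * Real.exp (-x)) = 1 - Real.exp (-(2 * x)) := by
      rw [Real.sinh_eq]; linear_combination e2 + e1
    rw [← key, mul_inv]
    field_simp
  rw [← hval]
  exact h.congr_fun fun n => (hterm n).symm

open Complex in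
lemma sinhIntegral {a : ℂ} (ha : 1 < a.re) :
    ∫ x in Set.Ioi (0:ℝ), (x : ℂ) ^ (a - 1) / (Real.sinh x) =
      Complex.Gamma a * 2 * ((1 - 2 ^ (-a)) * riemannZeta a) := by
  have hs0 : 0 < a.re := by linarith
  have hF : ∀ t ∈ Set.Ioi (0:ℝ), HasSum
      (fun i : ℕ => (2 : ℂ) * (Real.exp (-(2 * i + 1) * t) : ℝ))
      (((Real.sinh t : ℝ) : ℂ)⁻¹) := by
    intro t ht
    rw [Set.mem_Ioi] at ht
    have h := Complex.hasSum_ofReal.mpr (sinh_hasSum ht)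
    simpa using h
  have hp : ∀ i : ℕ, (2 : ℂ) = 0 ∨ 0 < (2 * (i:ℝ) + 1) := fun i => Or.inr (by positivity)
  have h_sum : Summable fun i : ℕ => ‖(2:ℂ)‖ / (2 * (i:ℝ) + 1) ^ a.re := by
    have h1 : Summable fun i : ℕ => (2:ℝ) * (1 / ((i:ℝ) + 1) ^ a.re) := by
      have := (summable_nat_add_iff 1).mpr (Real.summable_one_div_nat_rpow.mpr ha)
      exact (this.mul_left 2).congr (by intro i; push_cast; ring)
    refine Summable.of_nonneg_of_le (fun i => by positivity) (fun i => ?_) h1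
    have hb : ((i:ℝ) + 1) ^ a.re ≤ (2 * (i:ℝ) + 1) ^ a.re :=
      Real.rpow_le_rpow (by positivity) (by linarith [Nat.cast_nonneg (α := ℝ) i]) hs0.le
    calc ‖(2:ℂ)‖ / (2 * (i:ℝ) + 1) ^ a.re
        = 2 / (2 * (i:ℝ) + 1) ^ a.re := by norm_num
      _ ≤ 2 / ((i:ℝ) + 1) ^ a.re := by gcongr <;> positivity
      _ = 2 * (1 / ((i:ℝ) + 1) ^ a.re) := by ring
  have main := hasSum_mellin (a := fun _ : ℕ => (2:ℂ)) (p := fun i : ℕ => 2 * (i:ℝ) + 1)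
      (F := fun t : ℝ => ((Real.sinh t : ℝ) : ℂ)⁻¹) hp hs0 (by
        intro t ht
        simpa [neg_mul] using hF t ht) h_sum
  have hmel : mellin (fun t : ℝ => ((Real.sinh t : ℝ) : ℂ)⁻¹) a
      = ∫ x in Set.Ioi (0:ℝ), (x : ℂ) ^ (a - 1) / (Real.sinh x) := by
    rw [mellin]
    simp_rw [smul_eq_mul, div_eq_mul_inv]
  rw [← hmel, ← main.tsum_eq]
  have hterm : ∀ i : ℕ, Complex.Gamma a * 2 / ((2 * (i:ℝ) + 1 : ℝ) : ℂ) ^ a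
      = (Complex.Gamma a * 2) * (1 / ((2 * i + 1 : ℕ) : ℂ) ^ a) := by
    intro i
    have : ((2 * (i:ℝ) + 1 : ℝ) : ℂ) = ((2 * i + 1 : ℕ) : ℂ) := by push_cast; ring
    rw [this, mul_one_div]
  rw [tsum_congr hterm, tsum_mul_left, oddZetaSum ha]

lemma keyalg (M Q T P F G Z S E pi' : ℂ) (hM : M ≠ 0) (hQ : Q ≠ 0) (hT : T ≠ 0)
    (hP : P ≠ 0) (hF : F ≠ 0) (hpi : pi' ≠ 0) :
    (1 - 4*Q*T) * (2 * (M*(2*pi')*(T*P))⁻¹ * G * (E*S) * Z) / F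
      = 2 * (P⁻¹ * pi'⁻¹) * S * ((E * -1) * Q / (M*F) * (G*2*((1 - (4*Q*T)⁻¹)*Z))) := by
  field_simp
  ring

lemma cosNatPi (n : ℕ) : Complex.cos (n * (Real.pi : ℂ)) = (-1) ^ n := by
  induction n with
  | zero => simp
  | succ n ih =>
    rw [show ((n + 1 : ℕ) : ℂ) * (Real.pi : ℂ) = n * Real.pi + Real.pi by push_cast; ring,
      Complex.cos_add_pi, ih]
    ring


/-- The identity `∑_k (u^{2k}/(2k)!) η(s-2k) = η(s) + 2π^{s-1} sin(πs/2)
∫₀^∞ sin²(ux/(2π)) x^{-s}/sinh x dx` as formal power series in `u`, stated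
coefficient-wise: the coefficient of `u^{2k}` in `sin²(ux/(2π))` is
`(-1)^{k+1} 2^{2k-1} (x/(2π))^{2k}/(2k)!` for `k ≥ 1`, and the `k = 0`
coefficient of the right-hand side is `η(s)`. -/
theorem stmt9 (s : ℂ) (hs : s.re < 2) (k : ℕ) :
    eta (s - 2 * k) / (Nat.factorial (2 * k) : ℂ) =
      if k = 0 then eta s
      else
        2 * (Real.pi : ℂ) ^ (s - 1) * Complex.sin ((Real.pi : ℂ) * s / 2) *
          ∫ x in Set.Ioi (0 : ℝ),
            ((-1) ^ (k + 1) * 2 ^ (2 * k - 1) * ((x : ℂ) / (2 * Real.pi)) ^ (2 * k) /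
                (Nat.factorial (2 * k) : ℂ)) *
              (x : ℂ) ^ (-s) / Real.sinh x := by
  rcases eq_or_ne k 0 with hk | hk
  · subst hk; norm_num
  · rw [if_neg hk]
    set a : ℂ := 2 * (k : ℂ) + 1 - s with ha_def
    have hk1 : (1 : ℝ) ≤ k := by exact_mod_cast Nat.one_le_iff_ne_zero.mpr hk
    have hare : a.re = 2 * k + 1 - s.re := by simp [ha_def]
    have ha : 1 < a.re := by rw [hare]; linarith
    have hn : ∀ n : ℕ, a ≠ -n := by
      intro n h
      have h2 : a.re = -(n : ℝ) := by rw [h]; simp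
      have hn0 : (0 : ℝ) ≤ (n : ℝ) := Nat.cast_nonneg n
      linarith
    have h1 : a ≠ 1 := by
      intro h; rw [h] at ha; simp at ha
    have hzeta := riemannZeta_one_sub hn h1
    have hcos : Complex.cos ((Real.pi : ℂ) * a / 2)
        = (-1) ^ k * Complex.sin ((Real.pi : ℂ) * s / 2) := by
      have harg : (Real.pi : ℂ) * a / 2
          = ((Real.pi : ℂ) / 2 - (Real.pi : ℂ) * s / 2) + k * (Real.pi : ℂ) := by
        rw [ha_def]; ring
      rw [harg, Complex.cos_add, Complex.sin_nat_mul_pi, cosNatPi,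
        Complex.cos_pi_div_two_sub]
      ring
    have hfac : ((Nat.factorial (2 * k) : ℕ) : ℂ) ≠ 0 :=
      Nat.cast_ne_zero.mpr (Nat.factorial_ne_zero _)
    have hpi0 : ((Real.pi : ℝ) : ℂ) ≠ 0 := Complex.ofReal_ne_zero.mpr Real.pi_ne_zero
    have h2pi : ((2 : ℂ) * Real.pi) ≠ 0 := mul_ne_zero two_ne_zero hpi0
    set C : ℂ := (-1) ^ (k + 1) * 2 ^ (2 * k - 1)
        / ((2 * (Real.pi : ℂ)) ^ (2 * k) * (Nat.factorial (2 * k) : ℂ)) with hC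
    have hint : (∫ x in Set.Ioi (0 : ℝ),
          ((-1) ^ (k + 1) * 2 ^ (2 * k - 1) * ((x : ℂ) / (2 * Real.pi)) ^ (2 * k) /
              (Nat.factorial (2 * k) : ℂ)) * (x : ℂ) ^ (-s) / Real.sinh x)
        = C * ∫ x in Set.Ioi (0 : ℝ), (x : ℂ) ^ (a - 1) / Real.sinh x := by
      rw [← integral_const_mul]
      refine setIntegral_congr_fun measurableSet_Ioi (fun x hx => ?_)
      rw [Set.mem_Ioi] at hx
      have hx0 : (x : ℂ) ≠ 0 := Complex.ofReal_ne_zero.mpr hx.ne'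
      have hxp : (x : ℂ) ^ (a - 1) = (x : ℂ) ^ (2 * k : ℕ) * (x : ℂ) ^ (-s) := by
        rw [← Complex.cpow_natCast, ← Complex.cpow_add _ _ hx0]
        congr 1
        push_cast [ha_def]
        ring
      have hsinh0 : ((Real.sinh x : ℝ) : ℂ) ≠ 0 :=
        Complex.ofReal_ne_zero.mpr (Real.sinh_pos_iff.mpr hx).ne'
      have hM : ((2 : ℂ) * Real.pi) ^ (2 * k) ≠ 0 := pow_ne_zero _ h2pi
      rw [hxp, hC, div_pow]
      field_simp
    rw [hint, sinhIntegral ha]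
    have h1a : s - 2 * (k : ℂ) = 1 - a := by rw [ha_def]; ring
    rw [show eta (s - 2 * (k : ℂ)) = (1 - 2 ^ a) * riemannZeta (1 - a) by
      rw [h1a]; unfold eta; rw [sub_sub_cancel]]
    rw [hzeta, hcos]
    have hexp : a = ((2 * k + 1 : ℕ) : ℂ) + (-s) := by push_cast [ha_def]; ring
    have h2a : (2 : ℂ) ^ a = 2 ^ (2 * k + 1) * (2 : ℂ) ^ (-s) := by
      rw [hexp, Complex.cpow_add _ _ two_ne_zero, Complex.cpow_natCast]
    have h2pa : (2 * (Real.pi : ℂ)) ^ (-a)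
        = ((2 * (Real.pi : ℂ)) ^ (2 * k + 1) * (2 * (Real.pi : ℂ)) ^ (-s)) ⁻¹ := by
      rw [Complex.cpow_neg, hexp, Complex.cpow_add _ _ h2pi, Complex.cpow_natCast]
    have h2ps : (2 * (Real.pi : ℂ)) ^ (-s)
        = (2 : ℂ) ^ (-s) * ((Real.pi : ℂ)) ^ (-s) := by
      rw [show (2 * (Real.pi : ℂ)) = ((2 : ℝ) : ℂ) * ((Real.pi : ℝ) : ℂ) by push_cast; ring,
        Complex.mul_cpow_ofReal_nonneg (by norm_num) Real.pi_pos.le]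
      norm_num
    have hps : ((Real.pi : ℂ)) ^ (s - 1) = (((Real.pi : ℂ)) ^ (-s))⁻¹ * ((Real.pi : ℂ))⁻¹ := by
      rw [show s - 1 = -(-s) + (-1 : ℂ) by ring, Complex.cpow_add _ _ hpi0, Complex.cpow_neg,
        Complex.cpow_neg_one]
    have h2na : (2 : ℂ) ^ (-a) = ((2 : ℂ) ^ (2 * k + 1) * (2 : ℂ) ^ (-s))⁻¹ := by
      rw [Complex.cpow_neg, h2a]
    have hpow1 : (2 : ℂ) ^ (2 * k + 1) = 4 * 2 ^ (2 * k - 1) := by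
      rw [show 2 * k + 1 = (2 * k - 1) + 2 by omega, pow_add]
      ring
    have hpow2 : (2 * (Real.pi : ℂ)) ^ (2 * k + 1)
        = (2 * (Real.pi : ℂ)) ^ (2 * k) * (2 * Real.pi) := pow_succ _ _
    rw [h2a, h2pa, h2ps, hps, h2na, hpow1, hpow2, hC]
    have hT : (2 : ℂ) ^ (-s) ≠ 0 := by
      simp [Complex.cpow_eq_zero_iff]
    have hP : ((Real.pi : ℂ)) ^ (-s) ≠ 0 := by
      simp [Complex.cpow_eq_zero_iff, hpi0]
    have hM : ((2 : ℂ) * Real.pi) ^ (2 * k) ≠ 0 := pow_ne_zero _ h2pi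
    have hQ : (2 : ℂ) ^ (2 * k - 1) ≠ 0 := pow_ne_zero _ two_ne_zero
    rw [pow_succ (-1 : ℂ) k]
    generalize hMg : (2 * (Real.pi : ℂ)) ^ (2 * k) = M at hM ⊢
    generalize hQg : (2 : ℂ) ^ (2 * k - 1) = Q at hQ ⊢
    generalize hTg : (2 : ℂ) ^ (-s) = T at hT ⊢
    generalize hPg : ((Real.pi : ℂ)) ^ (-s) = P at hP ⊢
    generalize hFg : ((Nat.factorial (2 * k) : ℕ) : ℂ) = F at hfac ⊢
    exact keyalg M Q T P F (Complex.Gamma a) (riemannZeta a)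
      (Complex.sin ((Real.pi : ℂ) * s / 2)) ((-1) ^ k) ((Real.pi : ℂ)) hM hQ hT hP hfac hpi0
end

section
/- The Mittag-Leffler polynomials M_n, defined by ∑_n M_n(x) t^n = ((1+t)/(1-t))^x, satisfy the derivative identity M_n'(x) = 2 ∑_{k=0}^{⌊(n-1)/2⌋} M_{n-2k-1}(x)/(2k+1) for all n ≥ 1. -/
/-- The power series `log((1+t)/(1-t)) = ∑_{m odd} 2 t^m/m`. -/
noncomputable def Lser : PowerSeries (Polynomial ℚ) :=
  PowerSeries.mk fun m => if Odd m then Polynomial.C (2 / (m : ℚ)) else 0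

/-- The `j`-th term `x^j log((1+t)/(1-t))^j / j!` in the expansion of
`((1+t)/(1-t))^x = exp(x log((1+t)/(1-t)))`. -/
noncomputable def mlTerm (j : ℕ) : PowerSeries (Polynomial ℚ) :=
  PowerSeries.C (R := Polynomial ℚ)
      (Polynomial.C ((Nat.factorial j : ℚ)⁻¹) * Polynomial.X ^ j) * Lser ^ j

/-- The Mittag-Leffler polynomial `M_n`, the coefficient of `t^n` in
`((1+t)/(1-t))^x`.  (Terms `mlTerm j` with `j > n` have `t`-order greater
than `n`, so the truncated sum suffices.) -/
noncomputable def ML (n : ℕ) : Polynomial ℚ :=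
  PowerSeries.coeff (R := Polynomial ℚ) n (∑ j ∈ Finset.range (n + 1), mlTerm j)

noncomputable def Lser0 : PowerSeries ℚ :=
  PowerSeries.mk fun m => if Odd m then 2 / (m : ℚ) else 0

lemma Lser_eq : Lser = PowerSeries.map Polynomial.C Lser0 := by
  ext m
  simp [Lser, Lser0, apply_ite Polynomial.C]

lemma coeff_mlTerm (n j : ℕ) :
    PowerSeries.coeff (R := Polynomial ℚ) n (mlTerm j) =
      Polynomial.C ((Nat.factorial j : ℚ)⁻¹) * Polynomial.X ^ j *
        Polynomial.C (PowerSeries.coeff (R := ℚ) n (Lser0 ^ j)) := by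
  rw [mlTerm, Lser_eq, ← map_pow, PowerSeries.coeff_C_mul, PowerSeries.coeff_map]

lemma coeff_mlTerm_eq_zero {n j : ℕ} (h : n < j) :
    PowerSeries.coeff (R := Polynomial ℚ) n (mlTerm j) = 0 := by
  rw [coeff_mlTerm]
  have hX : (PowerSeries.X : PowerSeries ℚ) ∣ Lser0 := by
    rw [PowerSeries.X_dvd_iff]
    simp [Lser0, PowerSeries.constantCoeff_mk, Nat.odd_iff]
  have : (PowerSeries.X : PowerSeries ℚ) ^ j ∣ Lser0 ^ j := pow_dvd_pow_of_dvd hX j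
  have hz := (PowerSeries.X_pow_dvd_iff.mp this) n h
  simp [hz]

lemma deriv_coeff_mlTerm (n j : ℕ) :
    Polynomial.derivative (PowerSeries.coeff (R := Polynomial ℚ) n (mlTerm (j + 1))) =
      PowerSeries.coeff (R := Polynomial ℚ) n (mlTerm j * Lser) := by
  have hR : mlTerm j * Lser =
      PowerSeries.C (R := Polynomial ℚ)
        (Polynomial.C ((Nat.factorial j : ℚ)⁻¹) * Polynomial.X ^ j) * Lser ^ (j + 1) := by
    rw [mlTerm, mul_assoc, ← pow_succ]
  rw [coeff_mlTerm, hR, Lser_eq, ← map_pow, PowerSeries.coeff_C_mul, PowerSeries.coeff_map]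
  rw [Polynomial.derivative_mul, Polynomial.derivative_C, mul_zero, add_zero,
      Polynomial.derivative_mul, Polynomial.derivative_C, zero_mul, zero_add,
      Polynomial.derivative_X_pow, Nat.add_sub_cancel]
  have hfac : ((Nat.factorial (j + 1) : ℚ))⁻¹ * ((j + 1 : ℕ) : ℚ) = (Nat.factorial j : ℚ)⁻¹ := by
    rw [Nat.factorial_succ]
    push_cast
    rw [mul_inv]
    field_simp
  rw [← mul_assoc, ← Polynomial.C_mul, hfac]

lemma coeff_sum_mlTerm {i N : ℕ} (h : i < N) :
    PowerSeries.coeff (R := Polynomial ℚ) i (∑ j ∈ Finset.range N, mlTerm j) = ML i := by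
  rw [ML, map_sum, map_sum]
  exact (Finset.sum_subset (Finset.range_subset_range.2 h) (fun j _ hj =>
    coeff_mlTerm_eq_zero (by simp [Finset.mem_range] at hj; omega))).symm

lemma sum_odd (n : ℕ) (hn : 1 ≤ n) (g : ℕ → Polynomial ℚ) (hg : ∀ m, ¬ Odd m → g m = 0) :
    ∑ m ∈ Finset.range (n + 1), g m = ∑ k ∈ Finset.range ((n - 1) / 2 + 1), g (2 * k + 1) := by
  rw [← Finset.sum_filter_of_ne (s := Finset.range (n + 1)) (p := fun m => Odd m) (f := g)
    (fun m _ h => by by_contra ho; exact h (hg m ho))]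
  refine Finset.sum_nbij' (i := fun m => (m - 1) / 2) (j := fun k => 2 * k + 1) ?_ ?_ ?_ ?_ ?_
  · intro m hm
    simp only [Finset.mem_filter, Finset.mem_range, Nat.odd_iff] at hm ⊢
    omega
  · intro k hk
    simp only [Finset.mem_filter, Finset.mem_range, Nat.odd_iff] at hk ⊢
    omega
  · intro m hm
    simp only [Finset.mem_filter, Finset.mem_range, Nat.odd_iff] at hm
    omega
  · intro k hk
    omega
  · intro m hm
    simp only [Finset.mem_filter, Finset.mem_range, Nat.odd_iff] at hm
    have h2 : 2 * ((m - 1) / 2) + 1 = m := by omega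
    rw [show 2 * (fun m => (m - 1) / 2) m + 1 = 2 * ((m - 1) / 2) + 1 from rfl, h2]

/-- Derivative identity for Mittag-Leffler polynomials:
`M_n'(x) = 2 ∑_{k=0}^{⌊(n-1)/2⌋} M_{n-2k-1}(x)/(2k+1)` for `n ≥ 1`. -/
theorem stmt11 (n : ℕ) (hn : 1 ≤ n) :
    Polynomial.derivative (ML n) =
      ∑ k ∈ Finset.range ((n - 1) / 2 + 1),
        (2 / (2 * (k : ℚ) + 1)) • ML (n - (2 * k + 1)) := by
  have hd : Polynomial.derivative (ML n) =
      PowerSeries.coeff (R := Polynomial ℚ) n (Lser * ∑ j ∈ Finset.range n, mlTerm j) := by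
    rw [ML, map_sum, Polynomial.derivative_sum, Finset.sum_range_succ']
    have h0 : Polynomial.derivative (PowerSeries.coeff (R := Polynomial ℚ) n (mlTerm 0)) = 0 := by
      rw [coeff_mlTerm, pow_zero]
      have h1 : PowerSeries.coeff (R := ℚ) n (1 : PowerSeries ℚ) = 0 := by
        rw [PowerSeries.coeff_one, if_neg (by omega)]
      simp [h1]
    rw [h0, add_zero, mul_comm, Finset.sum_mul, map_sum]
    exact Finset.sum_congr rfl fun j _ => deriv_coeff_mlTerm n j
  rw [hd, PowerSeries.coeff_mul, Finset.Nat.sum_antidiagonal_eq_sum_range_succ_mk]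
  have hcoeff : ∀ m : ℕ, PowerSeries.coeff (R := Polynomial ℚ) m Lser =
      if Odd m then Polynomial.C (2 / (m : ℚ)) else 0 := fun m => by simp [Lser]
  rw [sum_odd n hn _ (fun m hm => by rw [hcoeff m, if_neg hm, zero_mul])]
  refine Finset.sum_congr rfl fun k hk => ?_
  simp only [Finset.mem_range] at hk
  have hodd : Odd (2 * k + 1) := ⟨k, by ring⟩
  rw [hcoeff, if_pos hodd, coeff_sum_mlTerm (by omega), Polynomial.smul_eq_C_mul]
  push_cast
  ring_nf
end

section
/- The Mittag-Leffler polynomials M_n, defined by ∑_n M_n(x) t^n = ((1+t)/(1-t))^x, satisfy M_{2n+1}(x)/x = (2/(2n+1)) ∑_{k=0}^n M_{2k}(x) for all n ≥ 0 (as an identity of polynomials, noting M_{2n+1}(0) = 0). -/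
open PowerSeries Finset

lemma coeff_mlTerm_of_lt {m j : ℕ} (h : m < j) :
    coeff m (mlTerm j) = 0 := by
  have hX : (X : PowerSeries (Polynomial ℚ)) ∣ Lser := by
    rw [X_dvd_iff]
    simp [Lser, PowerSeries.constantCoeff_mk]
  have : (X : PowerSeries (Polynomial ℚ)) ^ j ∣ mlTerm j :=
    Dvd.dvd.mul_left (pow_dvd_pow_of_dvd hX j) _
  exact X_pow_dvd_iff.mp this m h

lemma ML_eq (n N : ℕ) (h : n < N) :
    ML n = coeff n (∑ j ∈ range N, mlTerm j) := by
  unfold ML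
  rw [← Finset.sum_range_add_sum_Ico _ (Nat.succ_le_of_lt h)]
  rw [map_add, left_eq_add, map_sum]
  refine Finset.sum_eq_zero fun j hj => ?_
  exact coeff_mlTerm_of_lt (lt_of_lt_of_le (Nat.lt_succ_self n) (Finset.mem_Ico.mp hj).1)

lemma coeff_DLser (n : ℕ) :
    coeff n (d⁄dX (Polynomial ℚ) Lser) = if Even n then Polynomial.C 2 else 0 := by
  rw [coeff_derivative]
  by_cases h : Even n
  · rw [if_pos h]
    have ho : Odd (n + 1) := Even.add_one h
    simp only [Lser, coeff_mk, if_pos ho]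
    rw [show ((n : Polynomial ℚ) + 1) = Polynomial.C ((n : ℚ) + 1) by
        simp [Polynomial.C_eq_natCast], ← map_mul]
    congr 1
    have h1 : ((n : ℚ) + 1) ≠ 0 := by positivity
    push_cast
    field_simp
  · rw [if_neg h]
    have ho : ¬ Odd (n + 1) := by
      rw [Nat.odd_add_one, not_not]; exact Nat.not_even_iff_odd.mp h
    simp [Lser, coeff_mk, if_neg ho]

lemma key_L : (1 - X ^ 2 : PowerSeries (Polynomial ℚ)) * d⁄dX (Polynomial ℚ) Lser = 2 := by
  refine PowerSeries.ext fun n => ?_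
  rw [sub_mul, one_mul, map_sub, coeff_X_pow_mul', coeff_DLser,
    show ((2 : PowerSeries (Polynomial ℚ))) = C 2 from (map_ofNat _ 2).symm, coeff_C]
  rcases n with _ | _ | n
  · rw [if_pos Even.zero, if_neg (by omega), sub_zero, if_pos rfl]
    exact map_ofNat Polynomial.C 2
  · rw [if_neg (by simp [Nat.not_even_iff_odd]), if_neg (by omega), sub_zero,
      if_neg (by omega)]
  · rw [if_pos (by omega : 2 ≤ n + 2), show n + 2 - 2 = n from rfl, coeff_DLser,
      if_congr (by simp [Nat.even_add] : Even (n + 2) ↔ Even n) rfl rfl, sub_self,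
      if_neg (by omega)]

lemma D_eq (f : PowerSeries (Polynomial ℚ)) :
    d⁄dX (Polynomial ℚ) f = derivativeFun f := rfl

lemma D_mul (f g : PowerSeries (Polynomial ℚ)) :
    d⁄dX (Polynomial ℚ) (f * g) =
      f * d⁄dX (Polynomial ℚ) g + g * d⁄dX (Polynomial ℚ) f := by
  rw [D_eq, D_eq, D_eq, derivativeFun_mul, smul_eq_mul, smul_eq_mul]

lemma D_pow (f : PowerSeries (Polynomial ℚ)) (n : ℕ) :
    d⁄dX (Polynomial ℚ) (f ^ (n + 1)) =
      ((n + 1 : ℕ) : PowerSeries (Polynomial ℚ)) * (f ^ n * d⁄dX (Polynomial ℚ) f) := by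
  induction n with
  | zero => simp
  | succ m ih =>
    rw [pow_succ, D_mul, ih]
    push_cast
    ring

lemma D_mlTerm (j : ℕ) :
    d⁄dX (Polynomial ℚ) (mlTerm (j + 1)) =
      C Polynomial.X * d⁄dX (Polynomial ℚ) Lser * mlTerm j := by
  unfold mlTerm
  rw [D_mul, D_pow, derivative_C, mul_zero, add_zero]
  rw [show (((j + 1 : ℕ)) : PowerSeries (Polynomial ℚ)) = C (((j + 1 : ℕ) : Polynomial ℚ)) by
    simp]
  rw [← mul_assoc, ← map_mul]
  have hfac : Polynomial.C ((Nat.factorial (j + 1) : ℚ))⁻¹ * Polynomial.X ^ (j + 1) *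
      (((j + 1 : ℕ)) : Polynomial ℚ) =
      Polynomial.X * (Polynomial.C ((Nat.factorial j : ℚ))⁻¹ * Polynomial.X ^ j) := by
    have h1 : ((j : ℚ) + 1) ≠ 0 := by positivity
    have hs : ((Nat.factorial (j + 1) : ℚ))⁻¹ * (((j + 1 : ℕ)) : ℚ) =
        ((Nat.factorial j : ℚ))⁻¹ := by
      rw [Nat.factorial_succ]
      push_cast
      rw [mul_inv, mul_comm (((j : ℚ) + 1))⁻¹, mul_assoc, inv_mul_cancel₀ h1, mul_one]
    rw [show (((j + 1 : ℕ)) : Polynomial ℚ) = Polynomial.C (((j + 1 : ℕ)) : ℚ) by simp,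
      mul_assoc, mul_comm (Polynomial.X ^ (j + 1)), ← mul_assoc, ← map_mul, hs, pow_succ]
    ring
  rw [hfac, map_mul]
  ring

lemma D_mlTerm_zero : d⁄dX (Polynomial ℚ) (mlTerm 0) = 0 := by
  unfold mlTerm
  simp [D_eq, derivativeFun_C]

lemma key_sum (N : ℕ) :
    (1 - X ^ 2 : PowerSeries (Polynomial ℚ)) *
        d⁄dX (Polynomial ℚ) (∑ j ∈ range (N + 1), mlTerm j) =
      2 * C Polynomial.X * ∑ j ∈ range N, mlTerm j := by
  rw [map_sum, Finset.sum_range_succ']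
  simp only [D_mlTerm, D_mlTerm_zero]
  rw [add_zero, Finset.mul_sum, Finset.mul_sum]
  refine Finset.sum_congr rfl fun j _ => ?_
  calc (1 - X ^ 2 : PowerSeries (Polynomial ℚ)) *
        (C Polynomial.X * d⁄dX (Polynomial ℚ) Lser * mlTerm j)
      = C Polynomial.X *
          ((1 - X ^ 2) * d⁄dX (Polynomial ℚ) Lser) * mlTerm j := by ring
    _ = _ := by rw [key_L]; ring

lemma coeff_two_C_X_mul (φ : PowerSeries (Polynomial ℚ)) (n : ℕ) :
    coeff n (2 * C Polynomial.X * φ) =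
      2 * Polynomial.X * coeff n φ := by
  rw [show (2 * C Polynomial.X) = C (2 * Polynomial.X) by
    rw [map_mul, map_ofNat]]
  exact coeff_C_mul n φ _

lemma ML_base : ML 1 = 2 * Polynomial.X * ML 0 := by
  have h := congrArg (coeff 0) (key_sum 1)
  rw [coeff_two_C_X_mul, ← ML_eq 0 1 (by omega)] at h
  rw [sub_mul, one_mul, map_sub, coeff_X_pow_mul', if_neg (by omega), sub_zero,
    coeff_derivative, ← ML_eq 1 2 (by omega)] at h
  simpa using h

lemma ML_rec (m : ℕ) :
    ((m + 3 : ℕ) : Polynomial ℚ) * ML (m + 3) =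
      ((m + 1 : ℕ) : Polynomial ℚ) * ML (m + 1) + 2 * Polynomial.X * ML (m + 2) := by
  have h := congrArg (coeff (m + 2)) (key_sum (m + 4))
  rw [coeff_two_C_X_mul, ← ML_eq (m + 2) (m + 4) (by omega)] at h
  rw [sub_mul, one_mul, map_sub, coeff_X_pow_mul', if_pos (by omega : 2 ≤ m + 2),
    show m + 2 - 2 = m from rfl, coeff_derivative, coeff_derivative,
    ← ML_eq (m + 3) (m + 5) (by omega), ← ML_eq (m + 1) (m + 5) (by omega)] at h
  push_cast at h ⊢
  linear_combination h

lemma ML_claim (n : ℕ) :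
    ((2 * n + 1 : ℕ) : Polynomial ℚ) * ML (2 * n + 1) =
      2 * Polynomial.X * ∑ k ∈ range (n + 1), ML (2 * k) := by
  induction n with
  | zero => simpa using ML_base
  | succ n ih =>
    have hr := ML_rec (2 * n)
    rw [Finset.sum_range_succ]
    have e1 : 2 * (n + 1) + 1 = 2 * n + 3 := by omega
    have e2 : 2 * (n + 1) = 2 * n + 2 := by omega
    rw [e1, e2, hr, ih]
    ring

/-- `M_{2n+1}(x)/x = (2/(2n+1)) ∑_{k=0}^n M_{2k}(x)`, stated as the polynomial
identity `M_{2n+1}(x) = x · (2/(2n+1)) ∑_{k=0}^n M_{2k}(x)`. -/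
theorem stmt12 (n : ℕ) :
    ML (2 * n + 1) =
      Polynomial.X * ((2 / (2 * (n : ℚ) + 1)) • ∑ k ∈ Finset.range (n + 1), ML (2 * k)) := by
  have hc : (2 * (n : ℚ) + 1) ≠ 0 := by positivity
  have h := ML_claim n
  rw [show ((2 * n + 1 : ℕ) : Polynomial ℚ) = Polynomial.C (2 * (n : ℚ) + 1) by
    rw [map_add, map_mul, map_one, map_ofNat, Polynomial.C_eq_natCast]
    push_cast
    ring] at h
  have h2 := congrArg (fun p => Polynomial.C (2 * (n : ℚ) + 1)⁻¹ * p) h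
  simp only [← mul_assoc, ← map_mul, inv_mul_cancel₀ hc, map_one, one_mul] at h2
  rw [h2, Polynomial.smul_eq_C_mul, div_eq_mul_inv, map_mul,
    show (Polynomial.C (2 : ℚ)) = (2 : Polynomial ℚ) from map_ofNat _ 2]
  ring
end

section
/- For complex s with -1 < Re(s) < 0, ∫₀^∞ v^{s-1} tanh(v) dv = -(4Γ(s)/2^{s+1}) η(s). -/
open MeasureTheory

section Stmt14Aux

open Complex Set Filter Asymptotics Topology

noncomputable def Phi : ZMod 2 → ℂ := fun j => if j = 0 then -1 else 1
noncomputable def f1 : ℝ → ℂ := (Ioc (0:ℝ) 1).indicator (fun v => (Real.tanh v : ℂ))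
noncomputable def f2 : ℝ → ℂ := (Ioi (1:ℝ)).indicator (fun v => ((Real.tanh v : ℂ) - 1))


lemma sum_Phi : ∑ j, Phi j = 0 := by
  show ∑ j : ZMod 2, Phi j = 0
  rw [show (∑ j : ZMod 2, Phi j) = Phi 0 + Phi 1 from Fin.sum_univ_two Phi]
  simp [Phi]

lemma Phi_natCast (n : ℕ) : Phi ((n+1 : ℕ) : ZMod 2) = (-1 : ℂ)^n := by
  rcases Nat.even_or_odd n with h | h
  · have h2 : ¬ ((2:ℕ) ∣ (n+1)) := by rcases h with ⟨k, rfl⟩; omega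
    have : ((n+1 : ℕ) : ZMod 2) ≠ 0 := by
      rwa [Ne, ZMod.natCast_eq_zero_iff]
    rw [Phi, if_neg this, h.neg_one_pow]
  · have h2 : ((2:ℕ) ∣ (n+1)) := by rcases h with ⟨k, rfl⟩; omega
    have : ((n+1 : ℕ) : ZMod 2) = 0 := by
      rwa [ZMod.natCast_eq_zero_iff]
    rw [Phi, if_pos this, h.neg_one_pow]

lemma one_sub_tanh (x : ℝ) : 1 - Real.tanh x = 2 * Real.exp (-2*x) / (1 + Real.exp (-2*x)) := by
  have hc := Real.cosh_pos x
  rw [Real.tanh_eq_sinh_div_cosh]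
  rw [Real.cosh_eq, Real.sinh_eq]
  have he : Real.exp (-(2*x)) = Real.exp (-x) * Real.exp (-x) := by
    rw [← Real.exp_add]; ring_nf
  have hp := Real.exp_pos x
  have hp' := Real.exp_pos (-x)
  have hd : 0 < 1 + Real.exp (-2*x) := by positivity
  have hxx : Real.exp x * Real.exp (-x) = 1 := by rw [← Real.exp_add]; simp
  field_simp
  rw [show -(x*2) = -(2*x) by ring, he]
  linear_combination (-2*Real.exp (-x)) * hxx

lemma abs_one_sub_tanh_le (x : ℝ) : |1 - Real.tanh x| ≤ 2 * Real.exp (-2*x) := by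
  rw [one_sub_tanh]
  have h1 : 0 < 1 + Real.exp (-2*x) := by positivity
  rw [_root_.abs_of_nonneg (by positivity)]
  rw [div_le_iff₀ h1]
  nlinarith [Real.exp_pos (-2*x)]

lemma hasSum_one_sub_tanh {t : ℝ} (ht : 0 < t) :
    HasSum (fun n : ℕ => 2 * (-1:ℝ)^n * Real.exp (-(2*((n:ℝ)+1))*t)) (1 - Real.tanh t) := by
  set r : ℝ := -Real.exp (-2*t) with hr
  have hlt : |r| < 1 := by
    rw [hr, abs_neg, _root_.abs_of_pos (Real.exp_pos _)]
    rw [Real.exp_lt_one_iff]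
    nlinarith
  have hgeo := hasSum_geometric_of_abs_lt_one hlt
  have h := hgeo.mul_left (2 * Real.exp (-2*t))
  have hfun : ∀ n : ℕ, 2 * Real.exp (-2*t) * r^n = 2 * (-1:ℝ)^n * Real.exp (-(2*((n:ℝ)+1))*t) := by
    intro n
    rw [hr, neg_pow, ← Real.exp_nat_mul]
    rw [show -(2*((n:ℝ)+1))*t = -2*t + (n:ℝ)*(-2*t) by ring, Real.exp_add]
    ring
  have hval : 2 * Real.exp (-2*t) * (1 - r)⁻¹ = 1 - Real.tanh t := by
    rw [one_sub_tanh, hr]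
    rw [sub_neg_eq_add]
    field_simp
  rw [hval] at h
  exact h.congr_fun fun n => (hfun n).symm

lemma hasSum_eta {s : ℂ} (hs : 1 < s.re) :
    HasSum (fun n : ℕ => (-1 : ℂ)^n * ((n : ℂ)+1)^(-s)) ((1 - 2^(1-s)) * riemannZeta s) := by
  set g : ℕ → ℂ := fun n => ((n : ℂ)+1)^(-s) with hg_def
  have hsummable : Summable g := by
    have h1 : Summable (fun n : ℕ => 1/(n : ℂ)^s) := Complex.summable_one_div_nat_cpow.mpr hs
    have h2 := (summable_nat_add_iff 1).mpr h1
    refine h2.congr fun n => ?_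
    push_cast
    simp only [hg_def, cpow_neg, one_div]
  have hg : HasSum g (riemannZeta s) := by
    have := hsummable.hasSum
    have heq : ∑' n, g n = riemannZeta s := by
      rw [zeta_eq_tsum_one_div_nat_add_one_cpow hs]
      refine tsum_congr fun n => ?_
      simp only [hg_def, cpow_neg, one_div]
    rwa [heq] at this
  have hterm : ∀ k : ℕ, 2^(-s) * g k = g (2*k+1) := by
    intro k
    simp only [hg_def]
    push_cast
    rw [show (2*(k:ℂ)+1)+1 = ((2:ℝ):ℂ) * (((k:ℝ)+1 : ℝ) : ℂ) by push_cast; ring,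
      mul_cpow_ofReal_nonneg (by norm_num) (by positivity)]
    push_cast
    ring
  have hodd : HasSum (fun k => g (2*k+1)) (2^(-s) * riemannZeta s) :=
    (hg.mul_left (2^(-s))).congr_fun fun k => (hterm k).symm
  have hevenS : Summable (fun k => g (2*k)) :=
    hsummable.comp_injective (fun a b h => by omega)
  set E := ∑' k, g (2*k) with hE
  have heven : HasSum (fun k => g (2*k)) E := hevenS.hasSum
  have htot := heven.even_add_odd hodd
  have hEval : E = riemannZeta s - 2^(-s) * riemannZeta s := by
    have := hg.unique htot
    linear_combination -this
  have hoddneg : HasSum (fun k => (-1:ℂ)^(2*k+1) * g (2*k+1)) (-(2^(-s) * riemannZeta s)) := by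
    refine hodd.neg.congr_fun fun k => ?_
    rw [pow_succ, pow_mul]
    ring_nf
  have hevenpos : HasSum (fun k => (-1:ℂ)^(2*k) * g (2*k)) E := by
    refine heven.congr_fun fun k => ?_
    rw [pow_mul]
    norm_num
  have hfin := HasSum.even_add_odd (f := fun n => (-1:ℂ)^n * g n) hevenpos hoddneg
  rw [hEval] at hfin
  have h2 : (2:ℂ)^(1-s) = 2 * 2^(-s) := by
    rw [show (1 : ℂ) - s = 1 + (-s) by ring, cpow_add _ _ (two_ne_zero), cpow_one]
  have hval : riemannZeta s - 2^(-s)*riemannZeta s + -(2^(-s)*riemannZeta s)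
      = (1 - 2^(1-s))*riemannZeta s := by rw [h2]; ring
  rwa [hval] at hfin

lemma mellin_one_sub_tanh {s : ℂ} (hs : 1 < s.re) :
    mellin (fun t : ℝ => 1 - (Real.tanh t : ℂ)) s
      = 2^(1-s) * Complex.Gamma s * ((1 - 2^(1-s)) * riemannZeta s) := by
  have h0 : 0 < s.re := by linarith
  set a : ℕ → ℂ := fun n => 2 * (-1)^n with ha
  set p : ℕ → ℝ := fun n => 2*((n:ℝ)+1) with hp_def
  have hp : ∀ n, a n = 0 ∨ 0 < p n := fun n => Or.inr (by positivity)
  have hF : ∀ t ∈ Ioi (0:ℝ), HasSum (fun n => a n * (Real.exp (-(p n)*t) : ℝ))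
      ((1 : ℂ) - (Real.tanh t : ℂ)) := by
    intro t ht
    have h := (hasSum_one_sub_tanh ht).mapL Complex.ofRealCLM
    rw [show Complex.ofRealCLM (1 - Real.tanh t) = (1:ℂ) - (Real.tanh t : ℂ) by
      simp [Complex.ofReal_sub]] at h
    refine h.congr_fun fun n => ?_
    simp only [Function.comp, Complex.ofRealCLM_apply, ha, hp_def]
    push_cast
    ring
  have h_sum : Summable fun n => ‖a n‖ / (p n)^s.re := by
    have h1 : Summable (fun n : ℕ => (((n:ℝ)+1)^s.re)⁻¹) := by
      have h2 := Real.summable_nat_rpow_inv.mpr (by linarith : 1 < s.re)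
      have h3 := (summable_nat_add_iff 1).mpr h2
      refine h3.congr fun n => ?_
      push_cast
      ring_nf
    have h4 := h1.mul_left (2 / (2:ℝ)^s.re)
    refine h4.congr fun n => ?_
    simp only [ha, hp_def]
    rw [norm_mul, norm_pow, norm_neg, norm_one, one_pow, mul_one, Complex.norm_ofNat]
    rw [Real.mul_rpow (by norm_num) (by positivity)]
    field_simp
  have key := hasSum_mellin hp h0 hF h_sum
  have c_ne : (2:ℂ)^s ≠ 0 := by
    simp [Complex.cpow_eq_zero_iff]
  have key2 : HasSum (fun n : ℕ => (2^(1-s) * Complex.Gamma s) * ((-1 : ℂ)^n * ((n : ℂ)+1)^(-s)))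
      (mellin (fun t : ℝ => 1 - (Real.tanh t : ℂ)) s) := by
    refine key.congr_fun fun n => ?_
    simp only [ha, hp_def]
    have hcast : ((2*((n:ℝ)+1) : ℝ) : ℂ) = ((2:ℝ):ℂ) * (((n:ℝ)+1:ℝ):ℂ) := by push_cast; ring
    rw [hcast, mul_cpow_ofReal_nonneg (by norm_num) (by positivity), cpow_neg]
    have hY : ((((n:ℝ)+1 : ℝ)) : ℂ) = ((n:ℂ)+1) := by push_cast; ring
    have h2c : (((2:ℝ)):ℂ) = (2:ℂ) := by norm_num
    rw [hY, h2c]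
    set Y := ((n:ℂ)+1)^s with hYdef
    have hY_ne : Y ≠ 0 := by
      rw [hYdef, Ne, Complex.cpow_eq_zero_iff, not_and_or]
      have hne : ((n:ℝ)+1 : ℝ) ≠ 0 := by positivity
      exact Or.inl (by exact_mod_cast hne)
    have h21 : (2:ℂ)^(1-s) * (2:ℂ)^s = 2 := by
      rw [← Complex.cpow_add _ _ two_ne_zero]
      norm_num
    have hYY : Y⁻¹ * Y = 1 := inv_mul_cancel₀ hY_ne
    rw [eq_div_iff (mul_ne_zero c_ne hY_ne)]
    linear_combination (Complex.Gamma s * (-1:ℂ)^n * (Y⁻¹*Y)) * h21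
      + (Complex.Gamma s * (-1:ℂ)^n * 2) * hYY
  have heta := (hasSum_eta hs).mul_left (2^(1-s) * Complex.Gamma s)
  exact (heta.unique key2).symm

lemma continuous_tanh : Continuous Real.tanh := by
  have : Real.tanh = fun x => Real.sinh x / Real.cosh x := funext Real.tanh_eq_sinh_div_cosh
  rw [this]
  exact Real.continuous_sinh.div Real.continuous_cosh fun x => (Real.cosh_pos x).ne'

lemma abs_tanh_le_one (x : ℝ) : |Real.tanh x| ≤ 1 := by
  rw [Real.tanh_eq_sinh_div_cosh, abs_div, _root_.abs_of_pos (Real.cosh_pos x),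
    div_le_one (Real.cosh_pos x)]
  have h := Real.cosh_sq x
  have h2 := _root_.sq_abs (Real.sinh x)
  nlinarith [Real.cosh_pos x, abs_nonneg (Real.sinh x)]

lemma abs_tanh_le_sinh (x : ℝ) : |Real.tanh x| ≤ |Real.sinh x| := by
  rw [Real.tanh_eq_sinh_div_cosh, abs_div, _root_.abs_of_pos (Real.cosh_pos x)]
  exact div_le_self (abs_nonneg _) (Real.one_le_cosh x)

lemma tanhC_isBigO_zero :
    (fun x : ℝ => (Real.tanh x : ℂ)) =O[𝓝[>] (0:ℝ)] (fun x => x ^ (-(-1:ℝ))) := by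
  have hsinh : Real.sinh =O[𝓝 (0:ℝ)] (fun x : ℝ => x) := by
    have h := (Real.hasDerivAt_sinh 0).isBigO_sub
    simpa using h
  have h1 : (fun x : ℝ => (Real.tanh x : ℂ)) =O[𝓝 (0:ℝ)] Real.sinh := by
    refine isBigO_of_le _ fun x => ?_
    rw [Complex.norm_real, Real.norm_eq_abs, Real.norm_eq_abs]
    exact abs_tanh_le_sinh x
  have h2 : (fun x : ℝ => (Real.tanh x : ℂ)) =O[𝓝[>] (0:ℝ)] (fun x : ℝ => x) :=
    (h1.trans hsinh).mono nhdsWithin_le_nhds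
  have h3 : (fun x : ℝ => x ^ (-(-1:ℝ))) = fun x : ℝ => x := by
    funext x; rw [neg_neg, Real.rpow_one]
  rw [h3]
  exact h2


lemma f1_isBigO_zero : f1 =O[𝓝[>] (0:ℝ)] (fun x => x ^ (-(-1:ℝ))) := by
  refine EventuallyEq.trans_isBigO ?_ tanhC_isBigO_zero
  filter_upwards [Ioo_mem_nhdsGT_of_mem (Set.left_mem_Ico.mpr zero_lt_one : (0:ℝ) ∈ Set.Ico (0:ℝ) 1)] with x hx
  exact Set.indicator_of_mem (Set.mem_Ioc.mpr ⟨hx.1, hx.2.le⟩) _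

lemma f1_isBigO_top (a : ℝ) : f1 =O[atTop] (fun x : ℝ => x ^ (-a)) := by
  have h : f1 =ᶠ[atTop] (fun _ => (0:ℂ)) := by
    filter_upwards [eventually_gt_atTop (1:ℝ)] with x hx
    exact Set.indicator_of_notMem (fun hmem => absurd hmem.2 (not_le.mpr hx)) _
  exact h.trans_isBigO (isBigO_zero _ _)

lemma f2_isBigO_zero (b : ℝ) : f2 =O[𝓝[>] (0:ℝ)] (fun x : ℝ => x ^ (-b)) := by
  have h : f2 =ᶠ[𝓝[>] (0:ℝ)] (fun _ => (0:ℂ)) := by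
    filter_upwards [Ioo_mem_nhdsGT_of_mem (Set.left_mem_Ico.mpr zero_lt_one : (0:ℝ) ∈ Set.Ico (0:ℝ) 1)] with x hx
    exact Set.indicator_of_notMem (fun hmem => absurd hmem (not_lt.mpr hx.2.le)) _
  exact h.trans_isBigO (isBigO_zero _ _)

lemma norm_tanh_sub_one_le (x : ℝ) : ‖(Real.tanh x : ℂ) - 1‖ ≤ 2 * Real.exp (-2*x) := by
  have : ((Real.tanh x : ℂ) - 1) = (((Real.tanh x - 1 : ℝ)) : ℂ) := by push_cast; ring
  rw [this, Complex.norm_real, Real.norm_eq_abs, abs_sub_comm]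
  exact abs_one_sub_tanh_le x

lemma f2_isBigO_top : f2 =O[atTop] (fun t : ℝ => Real.exp (-2*t)) := by
  refine isBigO_of_le' (c := 2) _ fun x => ?_
  have h1 : ‖f2 x‖ ≤ ‖(Real.tanh x : ℂ) - 1‖ := by
    rw [f2]
    by_cases hx : x ∈ Ioi (1:ℝ)
    · rw [Set.indicator_of_mem hx]
    · rw [Set.indicator_of_notMem hx]; simp [norm_nonneg]
  refine h1.trans ?_
  rw [Real.norm_eq_abs, Real.abs_exp]
  exact norm_tanh_sub_one_le x

lemma f1_integrable : Integrable f1 := by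
  refine IntegrableOn.integrable_indicator ?_ measurableSet_Ioc
  exact ((Complex.continuous_ofReal.comp continuous_tanh)).integrableOn_Ioc

lemma f2_integrable : Integrable f2 := by
  refine IntegrableOn.integrable_indicator ?_ measurableSet_Ioi
  have hg : IntegrableOn (fun x : ℝ => 2 * Real.exp (-2*x)) (Ioi 1) :=
    (exp_neg_integrableOn_Ioi 1 two_pos).const_mul 2
  refine Integrable.mono' hg ?_ ?_
  · exact (((Complex.continuous_ofReal.comp continuous_tanh)).sub
      continuous_const).aestronglyMeasurable.restrict
  · filter_upwards with x
    exact norm_tanh_sub_one_le x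

lemma mellin_f1_differentiableAt {s : ℂ} (hs : -1 < s.re) :
    DifferentiableAt ℂ (mellin f1) s := by
  refine mellin_differentiableAt_of_isBigO_rpow
    (f1_integrable.locallyIntegrable.locallyIntegrableOn _)
    (f1_isBigO_top (s.re + 1)) (by linarith) f1_isBigO_zero (by linarith)

lemma mellin_f2_differentiableAt (s : ℂ) : DifferentiableAt ℂ (mellin f2) s := by
  refine mellin_differentiableAt_of_isBigO_rpow_exp two_pos
    (f2_integrable.locallyIntegrable.locallyIntegrableOn _)
    f2_isBigO_top (f2_isBigO_zero (s.re - 1)) (by linarith)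

lemma mellin_f1_eq (s : ℂ) :
    mellin f1 s = ∫ v in Ioc (0:ℝ) 1, (v:ℂ)^(s-1) * Real.tanh v := by
  rw [mellin]
  have h : ∀ t : ℝ, (t:ℂ)^(s-1) • f1 t
      = (Ioc (0:ℝ) 1).indicator (fun v : ℝ => (v:ℂ)^(s-1) * Real.tanh v) t := by
    intro t
    rw [f1]
    by_cases ht : t ∈ Ioc (0:ℝ) 1
    · rw [Set.indicator_of_mem ht, Set.indicator_of_mem ht, smul_eq_mul]
    · rw [Set.indicator_of_notMem ht, Set.indicator_of_notMem ht, smul_zero]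
  simp_rw [h]
  rw [setIntegral_indicator measurableSet_Ioc]
  congr 1
  rw [Set.inter_eq_right.mpr Set.Ioc_subset_Ioi_self]

lemma mellin_f2_eq (s : ℂ) :
    mellin f2 s = ∫ v in Ioi (1:ℝ), (v:ℂ)^(s-1) * ((Real.tanh v : ℂ) - 1) := by
  rw [mellin]
  have h : ∀ t : ℝ, (t:ℂ)^(s-1) • f2 t
      = (Ioi (1:ℝ)).indicator (fun v : ℝ => (v:ℂ)^(s-1) * ((Real.tanh v : ℂ) - 1)) t := by
    intro t
    rw [f2]
    by_cases ht : t ∈ Ioi (1:ℝ)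
    · rw [Set.indicator_of_mem ht, Set.indicator_of_mem ht, smul_eq_mul]
    · rw [Set.indicator_of_notMem ht, Set.indicator_of_notMem ht, smul_zero]
  simp_rw [h]
  rw [setIntegral_indicator measurableSet_Ioi]
  congr 1
  rw [Set.inter_eq_right.mpr (Set.Ioi_subset_Ioi zero_le_one)]

lemma int_Ioc_cpow {s : ℂ} (hs : 0 < s.re) :
    ∫ v in Ioc (0:ℝ) 1, (v:ℂ)^(s-1) = 1/s := by
  have hs0 : s ≠ 0 := fun h => by simp [h] at hs
  rw [← intervalIntegral.integral_of_le zero_le_one]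
  rw [integral_cpow (Or.inl (by simp only [sub_re, one_re]; linarith))]
  simp [sub_add_cancel, Complex.one_cpow, Complex.zero_cpow hs0]

lemma int_Ioi_cpow {s : ℂ} (hs : s.re < 0) :
    ∫ v in Ioi (1:ℝ), (v:ℂ)^(s-1) = -1/s := by
  have h := integral_Ioi_cpow_of_lt (a := s - 1)
    (by simp only [sub_re, one_re]; linarith) zero_lt_one
  rw [h]
  norm_num [sub_add_cancel, Complex.one_cpow]

lemma int_onesub {s : ℂ} (hs : 0 < s.re) :
    IntegrableOn (fun t : ℝ => (t:ℂ)^(s-1) * (1 - Real.tanh t)) (Ioi (0:ℝ)) := by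
  have hfc : LocallyIntegrableOn (fun t : ℝ => 1 - (Real.tanh t : ℂ)) (Ioi (0:ℝ)) :=
    ((continuous_const.sub
      (Complex.continuous_ofReal.comp continuous_tanh)).locallyIntegrable).locallyIntegrableOn _
  have htop : (fun t : ℝ => 1 - (Real.tanh t : ℂ)) =O[atTop] fun t => Real.exp (-2*t) := by
    refine isBigO_of_le' (c := 2) _ fun x => ?_
    rw [norm_sub_rev, Real.norm_eq_abs, Real.abs_exp]
    exact norm_tanh_sub_one_le x
  have hbot : (fun t : ℝ => 1 - (Real.tanh t : ℂ)) =O[𝓝[>] (0:ℝ)]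
      (fun x : ℝ => x ^ (-(0:ℝ))) := by
    rw [isBigO_iff]
    refine ⟨2, ?_⟩
    filter_upwards [self_mem_nhdsWithin] with x (hx : 0 < x)
    rw [norm_sub_rev, neg_zero, Real.rpow_zero, norm_one, mul_one]
    refine (norm_tanh_sub_one_le x).trans ?_
    nlinarith [Real.exp_le_one_iff.mpr (by nlinarith : -2*x ≤ 0)]
  have h := mellinConvergent_of_isBigO_rpow_exp two_pos hfc htop hbot (by linarith : (0:ℝ) < s.re)
  simpa only [MellinConvergent, smul_eq_mul] using h

lemma int_tanh {s : ℂ} (h1 : -1 < s.re) (h2 : s.re < 0) :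
    IntegrableOn (fun t : ℝ => (t:ℂ)^(s-1) * Real.tanh t) (Ioi (0:ℝ)) := by
  have hfc : LocallyIntegrableOn (fun t : ℝ => (Real.tanh t : ℂ)) (Ioi (0:ℝ)) :=
    ((Complex.continuous_ofReal.comp continuous_tanh).locallyIntegrable).locallyIntegrableOn _
  have htop : (fun t : ℝ => (Real.tanh t : ℂ)) =O[atTop] (fun x : ℝ => x ^ (-(0:ℝ))) := by
    refine isBigO_of_le _ fun x => ?_
    rw [Complex.norm_real, Real.norm_eq_abs, neg_zero, Real.rpow_zero, norm_one]
    exact abs_tanh_le_one x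
  have h := mellinConvergent_of_isBigO_rpow hfc htop (by linarith : s.re < 0)
    tanhC_isBigO_zero (by linarith : (-1:ℝ) < s.re)
  simpa only [MellinConvergent, smul_eq_mul] using h

lemma hdisj : Disjoint (Ioc (0:ℝ) 1) (Ioi (1:ℝ)) := by
  rw [Set.disjoint_left]
  intro x hx hx'
  exact absurd hx.2 (not_le.mpr hx')

lemma lhs_split {s : ℂ} (h1 : -1 < s.re) (h2 : s.re < 0) :
    ∫ v in Ioi (0:ℝ), (v:ℂ)^(s-1) * Real.tanh v = mellin f1 s + mellin f2 s - 1/s := by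
  have hint := int_tanh h1 h2
  have hIoc : IntegrableOn (fun t : ℝ => (t:ℂ)^(s-1) * Real.tanh t) (Ioc (0:ℝ) 1) :=
    hint.mono_set Set.Ioc_subset_Ioi_self
  have hIoi1 : IntegrableOn (fun t : ℝ => (t:ℂ)^(s-1) * Real.tanh t) (Ioi (1:ℝ)) :=
    hint.mono_set (Set.Ioi_subset_Ioi zero_le_one)
  have hunion : Ioc (0:ℝ) 1 ∪ Ioi 1 = Ioi 0 := Set.Ioc_union_Ioi_eq_Ioi zero_le_one
  rw [← hunion, setIntegral_union hdisj measurableSet_Ioi hIoc hIoi1]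
  have hpow : IntegrableOn (fun v : ℝ => (v:ℂ)^(s-1)) (Ioi (1:ℝ)) :=
    integrableOn_Ioi_cpow_of_lt (by simp only [sub_re, one_re]; linarith) zero_lt_one
  have hsub : ∫ v in Ioi (1:ℝ), (v:ℂ)^(s-1) * ((Real.tanh v : ℂ) - 1)
      = (∫ v in Ioi (1:ℝ), (v:ℂ)^(s-1) * Real.tanh v) - ∫ v in Ioi (1:ℝ), (v:ℂ)^(s-1) := by
    rw [← integral_sub hIoi1 hpow]
    refine setIntegral_congr_fun measurableSet_Ioi fun v hv => by ring
  rw [mellin_f1_eq, mellin_f2_eq, hsub, int_Ioi_cpow h2]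
  ring

lemma key_eq {s : ℂ} (hs : 1 < s.re) :
    s * (mellin f1 s + mellin f2 s) - 1
      = -(2:ℂ)^(1-s) * Complex.Gamma (s+1) * ((1 - 2^(1-s)) * riemannZeta s) := by
  have h0 : 0 < s.re := by linarith
  have hs0 : s ≠ 0 := fun h => by simp [h] at h0
  have hone := int_onesub (s := s) h0
  have hIoc1 : IntegrableOn (fun v : ℝ => (v:ℂ)^(s-1) * (1 - Real.tanh v)) (Ioc (0:ℝ) 1) :=
    hone.mono_set Set.Ioc_subset_Ioi_self
  have hIoi1 : IntegrableOn (fun v : ℝ => (v:ℂ)^(s-1) * (1 - Real.tanh v)) (Ioi (1:ℝ)) :=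
    hone.mono_set (Set.Ioi_subset_Ioi zero_le_one)
  have hpowIoc : IntegrableOn (fun v : ℝ => (v:ℂ)^(s-1)) (Ioc (0:ℝ) 1) := by
    have h := intervalIntegral.intervalIntegrable_cpow' (a := 0) (b := 1) (by simp only [sub_re, one_re]; linarith : (-1:ℝ) < (s-1).re)
    exact (intervalIntegrable_iff_integrableOn_Ioc_of_le zero_le_one).mp h
  have step1 : mellin f1 s = -(∫ v in Ioc (0:ℝ) 1, (v:ℂ)^(s-1) * (1 - Real.tanh v)) + 1/s := by
    rw [mellin_f1_eq]
    have heq : ∫ v in Ioc (0:ℝ) 1, (v:ℂ)^(s-1) * Real.tanh v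
        = ∫ v in Ioc (0:ℝ) 1, (-((v:ℂ)^(s-1) * (1 - Real.tanh v)) + (v:ℂ)^(s-1)) :=
      setIntegral_congr_fun measurableSet_Ioc fun v hv => by ring
    have hnegIoc : IntegrableOn (fun v : ℝ => -((v:ℂ)^(s-1) * (1 - Real.tanh v))) (Ioc (0:ℝ) 1) :=
      hIoc1.neg
    rw [heq, integral_add hnegIoc hpowIoc, integral_neg, int_Ioc_cpow h0]
  have step2 : mellin f2 s = -(∫ v in Ioi (1:ℝ), (v:ℂ)^(s-1) * (1 - Real.tanh v)) := by
    rw [mellin_f2_eq, ← integral_neg]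
    refine setIntegral_congr_fun measurableSet_Ioi fun v hv => by ring
  have step3 : (∫ v in Ioc (0:ℝ) 1, (v:ℂ)^(s-1) * (1 - Real.tanh v))
      + (∫ v in Ioi (1:ℝ), (v:ℂ)^(s-1) * (1 - Real.tanh v))
      = mellin (fun t : ℝ => 1 - (Real.tanh t : ℂ)) s := by
    rw [← setIntegral_union hdisj measurableSet_Ioi hIoc1 hIoi1,
      Set.Ioc_union_Ioi_eq_Ioi zero_le_one, mellin]
    simp_rw [smul_eq_mul]
  have hGamma : Complex.Gamma (s+1) = s * Complex.Gamma s := Complex.Gamma_add_one s hs0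
  rw [step1, step2]
  have : -(∫ v in Ioc (0:ℝ) 1, (v:ℂ)^(s-1) * (1 - Real.tanh v)) + 1/s
      + -(∫ v in Ioi (1:ℝ), (v:ℂ)^(s-1) * (1 - Real.tanh v))
      = 1/s - mellin (fun t : ℝ => 1 - (Real.tanh t : ℂ)) s := by
    rw [← step3]; ring
  rw [this, mellin_one_sub_tanh hs, hGamma]
  field_simp
  ring

lemma LFunction_eq_on {s : ℂ} (hs : 1 < s.re) :
    ZMod.LFunction Phi s = (1 - 2^(1-s)) * riemannZeta s := by
  rw [ZMod.LFunction_eq_LSeries Phi hs]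
  have h := hasSum_eta hs
  have h2 : ∀ n : ℕ, LSeries.term (fun n : ℕ => Phi n) s (n+1)
      = (-1:ℂ)^n * ((n:ℂ)+1)^(-s) := by
    intro n
    rw [LSeries.term_def]
    rw [if_neg (Nat.succ_ne_zero n)]
    rw [Phi_natCast n, cpow_neg]
    push_cast
    rw [div_eq_mul_inv]
  have h3 : HasSum (fun n : ℕ => LSeries.term (fun n : ℕ => Phi n) s (n+1))
      ((1 - 2^(1-s)) * riemannZeta s) := h.congr_fun h2
  have h4 : HasSum (LSeries.term (fun n : ℕ => Phi n) s)
      ((1 - 2^(1-s)) * riemannZeta s) := by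
    refine (hasSum_nat_add_iff' 1).mp ?_
    simpa using h3
  exact h4.tsum_eq

lemma two_mem_nhds : {z : ℂ | 1 < z.re} ∈ 𝓝 (2:ℂ) := by
  refine (isOpen_lt continuous_const Complex.continuous_re).mem_nhds ?_
  norm_num

lemma LFunction_eq {s : ℂ} (hs : s ≠ 1) :
    ZMod.LFunction Phi s = (1 - 2^(1-s)) * riemannZeta s := by
  have hWo : IsOpen ({(1:ℂ)}ᶜ : Set ℂ) := isOpen_compl_singleton
  have hWc : IsPreconnected ({(1:ℂ)}ᶜ : Set ℂ) := by
    have h := isPathConnected_compl_singleton_of_one_lt_rank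
      (by rw [rank_real_complex]; exact Cardinal.one_lt_two) (1:ℂ)
    exact h.isConnected.isPreconnected
  have hf : AnalyticOnNhd ℂ (ZMod.LFunction Phi) ({(1:ℂ)}ᶜ : Set ℂ) :=
    DifferentiableOn.analyticOnNhd
      (fun z _ => (ZMod.differentiableAt_LFunction Phi z (Or.inr sum_Phi)).differentiableWithinAt)
      hWo
  have hg : AnalyticOnNhd ℂ (fun z => (1 - 2^(1-z)) * riemannZeta z) ({(1:ℂ)}ᶜ : Set ℂ) := by
    refine DifferentiableOn.analyticOnNhd (fun z hz => DifferentiableAt.differentiableWithinAt ?_) hWo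
    have h2 : DifferentiableAt ℂ (fun z : ℂ => (2:ℂ)^(1-z)) z :=
      DifferentiableAt.const_cpow ((differentiableAt_const 1).sub differentiableAt_id)
        (Or.inl two_ne_zero)
    exact ((differentiableAt_const 1).sub h2).mul (differentiableAt_riemannZeta hz)
  have heq := hf.eqOn_of_preconnected_of_eventuallyEq hg hWc
    (show (2:ℂ) ∈ ({(1:ℂ)}ᶜ : Set ℂ) by norm_num)
    (eventually_of_mem two_mem_nhds fun z hz => LFunction_eq_on hz)
  exact heq hs

lemma G_eq_R_all {s : ℂ} (hs : -1 < s.re) :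
    s * (mellin f1 s + mellin f2 s) - 1
      = -(2:ℂ)^(1-s) * Complex.Gamma (s+1) * ZMod.LFunction Phi s := by
  have hUo : IsOpen {z : ℂ | -1 < z.re} := isOpen_lt continuous_const Complex.continuous_re
  have hUc : IsPreconnected {z : ℂ | -1 < z.re} := (convex_halfSpace_re_gt (-1)).isPreconnected
  have hG : AnalyticOnNhd ℂ (fun z => z * (mellin f1 z + mellin f2 z) - 1)
      {z : ℂ | -1 < z.re} := by
    refine DifferentiableOn.analyticOnNhd (fun z hz => DifferentiableAt.differentiableWithinAt ?_) hUo
    exact (differentiableAt_id.mul ((mellin_f1_differentiableAt hz).add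
      (mellin_f2_differentiableAt z))).sub (differentiableAt_const 1)
  have hR : AnalyticOnNhd ℂ
      (fun z => -(2:ℂ)^(1-z) * Complex.Gamma (z+1) * ZMod.LFunction Phi z)
      {z : ℂ | -1 < z.re} := by
    refine DifferentiableOn.analyticOnNhd (fun z hz => DifferentiableAt.differentiableWithinAt ?_) hUo
    have h2 : DifferentiableAt ℂ (fun z : ℂ => (2:ℂ)^(1-z)) z :=
      DifferentiableAt.const_cpow ((differentiableAt_const 1).sub differentiableAt_id)
        (Or.inl two_ne_zero)
    have hne : ∀ m : ℕ, z + 1 ≠ -(m:ℂ) := by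
      intro m hmm
      have := congrArg Complex.re hmm
      simp only [add_re, one_re, neg_re, natCast_re] at this
      have hz' : -1 < z.re := hz
      have : z.re + 1 = -(m:ℝ) := this
      have hm : (0:ℝ) ≤ (m:ℝ) := Nat.cast_nonneg m
      linarith
    have hGam : DifferentiableAt ℂ (fun z : ℂ => Complex.Gamma (z+1)) z :=
      (Complex.differentiableAt_Gamma (z+1) hne).comp z (differentiableAt_id.add_const 1)
    have hLF : DifferentiableAt ℂ (ZMod.LFunction Phi) z :=
      ZMod.differentiableAt_LFunction Phi z (Or.inr sum_Phi)
    exact (h2.neg.mul hGam).mul hLF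
  have heq := hG.eqOn_of_preconnected_of_eventuallyEq hR hUc
    (show (2:ℂ) ∈ {z : ℂ | -1 < z.re} by norm_num)
    (eventually_of_mem two_mem_nhds fun z hz => by
      have h := key_eq hz
      have h2 := LFunction_eq_on hz
      simp only
      rw [h, h2])
  exact heq hs

end Stmt14Aux

theorem stmt14 (s : ℂ) (hs₁ : -1 < s.re) (hs₂ : s.re < 0) :
    (∫ v in Set.Ioi (0 : ℝ), (v : ℂ) ^ (s - 1) * Real.tanh v) =
      -(4 * Complex.Gamma s / 2 ^ (s + 1)) * eta s := by
  have hs0 : s ≠ 0 := fun h => by rw [h] at hs₂; norm_num at hs₂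
  have hs1 : s ≠ 1 := fun h => by rw [h] at hs₂; norm_num at hs₂
  have h := G_eq_R_all (by linarith : -1 < s.re)
  rw [LFunction_eq hs1, Complex.Gamma_add_one s hs0] at h
  rw [lhs_split hs₁ hs₂]
  simp only [eta]
  have hpow_ne : (2:ℂ)^(s+1) ≠ 0 := by
    simp [Complex.cpow_eq_zero_iff]
  have h4 : (4:ℂ) / 2^(s+1) = 2^(1-s) := by
    rw [div_eq_iff hpow_ne, ← Complex.cpow_add _ _ two_ne_zero]
    rw [show (1:ℂ) - s + (s+1) = ((2:ℕ):ℂ) by push_cast; ring, Complex.cpow_natCast]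
    norm_num
  rw [show -(4 * Complex.Gamma s / 2^(s+1)) = -((4 / 2^(s+1)) * Complex.Gamma s) by ring, h4]
  have hinv : s⁻¹ * s = 1 := inv_mul_cancel₀ hs0
  linear_combination s⁻¹ * h - ((mellin f1 s + mellin f2 s)
    + (2:ℂ)^(1-s) * Complex.Gamma s * ((1 - 2^(1-s)) * riemannZeta s)) * hinv
end

section
/- Fix a real number x. For each k ≥ 1, ∫_0^∞ e^{ixρ/π} tanh^{2k+1}(ρ/2) / (2 sinh²(ρ/2)) dρ has absolute value at most 2π/((2k-1)|x|) for x ≠ 0; in particular, also |∫_0^∞ tanh^{2k+1}(ρ/2)/(2 sinh²(ρ/2)) dρ| = 1/(2k). -/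
open MeasureTheory Real Filter Set Topology

noncomputable def tt (ρ : ℝ) : ℝ := Real.sinh (ρ/2) / Real.cosh (ρ/2)

lemma tt_cont : Continuous tt :=
  Continuous.div (Real.continuous_sinh.comp (continuous_id.div_const 2))
    (Real.continuous_cosh.comp (continuous_id.div_const 2)) fun ρ => (Real.cosh_pos _).ne'

lemma one_sub_tt_sq (ρ : ℝ) : 1 - tt ρ ^ 2 = 1 / Real.cosh (ρ/2) ^ 2 := by
  have h := Real.cosh_sq_sub_sinh_sq (ρ/2)
  have hc := (Real.cosh_pos (ρ/2)).ne'
  unfold tt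
  field_simp
  linarith

lemma tt_sq_le_one (ρ : ℝ) : tt ρ ^ 2 ≤ 1 := by
  have := one_sub_tt_sq ρ
  have hc : (0:ℝ) < 1 / Real.cosh (ρ/2) ^ 2 := by positivity
  linarith

lemma tt_zero : tt 0 = 0 := by simp [tt]

lemma tt_nonneg {ρ : ℝ} (h : 0 ≤ ρ) : 0 ≤ tt ρ :=
  div_nonneg (Real.sinh_nonneg_iff.2 (by linarith)) (Real.cosh_pos _).le

lemma tt_hasDerivAt (ρ : ℝ) : HasDerivAt tt (1 / (2 * Real.cosh (ρ/2) ^ 2)) ρ := by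
  have h2 : HasDerivAt (fun ρ : ℝ => ρ / 2) (1/2 : ℝ) ρ := by
    simpa using (hasDerivAt_id ρ).div_const 2
  have hs : HasDerivAt (fun ρ : ℝ => Real.sinh (ρ/2)) (Real.cosh (ρ/2) * (1/2)) ρ :=
    by exact (Real.hasDerivAt_sinh (ρ/2)).comp ρ h2
  have hc : HasDerivAt (fun ρ : ℝ => Real.cosh (ρ/2)) (Real.sinh (ρ/2) * (1/2)) ρ :=
    by exact (Real.hasDerivAt_cosh (ρ/2)).comp ρ h2
  have := hs.div hc (Real.cosh_pos (ρ/2)).ne'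
  refine this.congr_deriv (Eq.symm ?_)
  have h := Real.cosh_sq_sub_sinh_sq (ρ/2)
  have hcn := (Real.cosh_pos (ρ/2)).ne'
  rw [div_eq_div_iff (by positivity) (by positivity)]
  linear_combination (-(Real.cosh (ρ/2))^2) * h

lemma tt_tendsto : Tendsto tt atTop (𝓝 1) := by
  have hid : tt = fun ρ => (1 - Real.exp (-ρ)) / (1 + Real.exp (-ρ)) := by
    funext ρ
    have h1 : Real.exp (ρ/2) * Real.exp (-ρ) = Real.exp (-(ρ/2)) := by
      rw [← Real.exp_add]; ring_nf
    have hc := (Real.cosh_pos (ρ/2)).ne'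
    have hd : (0:ℝ) < 1 + Real.exp (-ρ) := by positivity
    unfold tt
    rw [div_eq_div_iff hc hd.ne', Real.sinh_eq, Real.cosh_eq]
    linear_combination h1
  rw [hid]
  have h := Real.tendsto_exp_neg_atTop_nhds_zero
  have h1 : Tendsto (fun ρ : ℝ => 1 - Real.exp (-ρ)) atTop (𝓝 (1 - 0)) :=
    tendsto_const_nhds.sub h
  have h2 : Tendsto (fun ρ : ℝ => 1 + Real.exp (-ρ)) atTop (𝓝 (1 + 0)) :=
    tendsto_const_nhds.add h
  have := h1.div h2 (by norm_num)
  simpa [Pi.div_def] using this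

lemma tt_pow_hasDerivAt (n : ℕ) (ρ : ℝ) :
    HasDerivAt (fun ρ => tt ρ ^ (n+1)) (((n:ℝ)+1) * tt ρ ^ n * (1/(2*Real.cosh (ρ/2)^2))) ρ := by
  have := (tt_hasDerivAt ρ).fun_pow (n+1)
  simpa using this

noncomputable def gg (m : ℕ) (ρ : ℝ) : ℝ := (tt ρ^(2*m+1) - tt ρ^(2*m+3))/2

noncomputable def gg' (m : ℕ) (ρ : ℝ) : ℝ :=
  ((2*(m:ℝ)+1) * tt ρ^(2*m) - (2*(m:ℝ)+3) * tt ρ^(2*m+2)) * (1/(2*Real.cosh (ρ/2)^2)) / 2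

noncomputable def pphi (m : ℕ) (ρ : ℝ) : ℝ :=
  ((2*(m:ℝ)+1) * tt ρ^(2*m) * (1 - tt ρ^2) + 2 * tt ρ^(2*m+2)) * (1/(2*Real.cosh (ρ/2)^2)) / 2

noncomputable def PPhi (m : ℕ) (ρ : ℝ) : ℝ :=
  ((2*(m:ℝ)+1) * (tt ρ^(2*m+1)/(2*(m:ℝ)+1) - tt ρ^(2*m+3)/(2*(m:ℝ)+3))
    + 2 * (tt ρ^(2*m+3)/(2*(m:ℝ)+3))) / 2

lemma hw_eq (ρ : ℝ) : (1:ℝ)/(2*Real.cosh (ρ/2)^2) = (1 - tt ρ^2)/2 := by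
  rw [one_sub_tt_sq]; ring

lemma hw_cont : Continuous fun ρ : ℝ => 1/(2*Real.cosh (ρ/2)^2) :=
  continuous_const.div
    (continuous_const.mul ((Real.continuous_cosh.comp (continuous_id.div_const 2)).pow 2))
    (fun ρ => by positivity)

lemma gg_hasDerivAt (m : ℕ) (ρ : ℝ) : HasDerivAt (gg m) (gg' m ρ) ρ := by
  have h := ((tt_pow_hasDerivAt (2*m) ρ).sub (tt_pow_hasDerivAt (2*m+2) ρ)).div_const 2
  refine h.congr_deriv (Eq.symm ?_)
  unfold gg'; push_cast; ring

lemma PPhi_hasDerivAt (m : ℕ) (ρ : ℝ) : HasDerivAt (PPhi m) (pphi m ρ) ρ := by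
  have h1 := (tt_pow_hasDerivAt (2*m) ρ).div_const (2*(m:ℝ)+1)
  have h2 := (tt_pow_hasDerivAt (2*m+2) ρ).div_const (2*(m:ℝ)+3)
  have h := (((h1.sub h2).const_mul (2*(m:ℝ)+1)).add (h2.const_mul 2)).div_const 2
  refine h.congr_deriv (Eq.symm ?_)
  unfold pphi
  have ha : (2*(m:ℝ)+1) ≠ 0 := by positivity
  have hb : (2*(m:ℝ)+3) ≠ 0 := by positivity
  push_cast
  field_simp
  ring

lemma pphi_nonneg (m : ℕ) (ρ : ℝ) : 0 ≤ pphi m ρ := by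
  unfold pphi
  have h1 : (0:ℝ) ≤ 1 - tt ρ^2 := by linarith [tt_sq_le_one ρ]
  have h2 : (0:ℝ) ≤ tt ρ^(2*m) := by rw [pow_mul]; positivity
  have h3 : (0:ℝ) ≤ tt ρ^(2*m+2) := by rw [show 2*m+2 = 2*(m+1) by ring, pow_mul]; positivity
  have hw : (0:ℝ) ≤ 1/(2*Real.cosh (ρ/2)^2) := by positivity
  have hm : (0:ℝ) ≤ 2*(m:ℝ)+1 := by positivity
  apply div_nonneg _ (by norm_num)
  exact mul_nonneg (add_nonneg (mul_nonneg (mul_nonneg hm h2) h1)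
    (mul_nonneg (by norm_num) h3)) hw

lemma gg'_abs_le (m : ℕ) (ρ : ℝ) : |gg' m ρ| ≤ pphi m ρ := by
  have h1 : (0:ℝ) ≤ 1 - tt ρ^2 := by linarith [tt_sq_le_one ρ]
  have h2 : (0:ℝ) ≤ tt ρ^(2*m) := by rw [pow_mul]; positivity
  have h3 : (0:ℝ) ≤ tt ρ^(2*m+2) := by rw [show 2*m+2 = 2*(m+1) by ring, pow_mul]; positivity
  have hw : (0:ℝ) ≤ 1/(2*Real.cosh (ρ/2)^2) := by positivity
  have hm : (0:ℝ) ≤ 2*(m:ℝ)+1 := by positivity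
  have e1 : pphi m ρ - gg' m ρ = 2 * tt ρ^(2*m+2) * (1/(2*Real.cosh (ρ/2)^2)) := by
    unfold pphi gg'; ring
  have e2 : pphi m ρ + gg' m ρ
      = (2*(m:ℝ)+1) * tt ρ^(2*m) * (1 - tt ρ^2) * (1/(2*Real.cosh (ρ/2)^2)) := by
    unfold pphi gg'; ring
  rw [abs_le]
  constructor
  · nlinarith [mul_nonneg (mul_nonneg (mul_nonneg hm h2) h1) hw]
  · nlinarith [mul_nonneg (mul_nonneg (by norm_num : (0:ℝ) ≤ 2) h3) hw]

lemma gg_cont (m : ℕ) : Continuous (gg m) := by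
  unfold gg
  exact ((tt_cont.pow _).sub (tt_cont.pow _)).div_const 2

lemma gg'_cont (m : ℕ) : Continuous (gg' m) := by
  unfold gg'
  exact (((continuous_const.mul (tt_cont.pow _)).sub
    (continuous_const.mul (tt_cont.pow _))).mul hw_cont).div_const 2

lemma gg_tendsto (m : ℕ) : Tendsto (gg m) atTop (𝓝 0) := by
  have := ((tt_tendsto.pow (2*m+1)).sub (tt_tendsto.pow (2*m+3))).div_const 2
  show Tendsto (fun ρ => gg m ρ) atTop (𝓝 0)
  simpa [gg] using this

lemma gg_zero (m : ℕ) : gg m 0 = 0 := by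
  simp [gg, tt_zero, zero_pow (by omega : 2*m+1 ≠ 0), zero_pow (by omega : 2*m+3 ≠ 0)]

lemma gg_nonneg (m : ℕ) {ρ : ℝ} (h : 0 ≤ ρ) : 0 ≤ gg m ρ := by
  have e : gg m ρ = tt ρ^(2*m+1) * (1 - tt ρ^2) / 2 := by unfold gg; ring
  rw [e]
  have h1 : (0:ℝ) ≤ 1 - tt ρ^2 := by linarith [tt_sq_le_one ρ]
  have h2 : (0:ℝ) ≤ tt ρ^(2*m+1) := pow_nonneg (tt_nonneg h) _
  positivity

lemma gg_integral (m : ℕ) : ∫ ρ in Ioi (0:ℝ), gg m ρ = 1/(2*(m:ℝ)+2) := by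
  have hG : ∀ ρ, HasDerivAt (fun ρ => tt ρ^(2*m+2)/(2*(m:ℝ)+2)) (gg m ρ) ρ := by
    intro ρ
    have h := (tt_pow_hasDerivAt (2*m+1) ρ).div_const (2*(m:ℝ)+2)
    refine h.congr_deriv (Eq.symm ?_)
    rw [hw_eq]
    unfold gg
    have : (2*(m:ℝ)+2) ≠ 0 := by positivity
    push_cast
    field_simp
    ring
  have hlim : Tendsto (fun ρ => tt ρ^(2*m+2)/(2*(m:ℝ)+2)) atTop (𝓝 (1/(2*(m:ℝ)+2))) := by
    simpa using (tt_tendsto.pow (2*m+2)).div_const (2*(m:ℝ)+2)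
  have := integral_Ioi_of_hasDerivAt_of_nonneg
    ((((tt_cont.pow _).div_const _)).continuousWithinAt)
    (fun ρ _ => hG ρ) (fun ρ hρ => gg_nonneg m (le_of_lt hρ)) hlim
  rw [this]
  simp [tt_zero, zero_pow (by omega : 2*m+2 ≠ 0)]

lemma gg_integrableOn (m : ℕ) : IntegrableOn (gg m) (Ioi (0:ℝ)) := by
  have hG : ∀ ρ, HasDerivAt (fun ρ => tt ρ^(2*m+2)/(2*(m:ℝ)+2)) (gg m ρ) ρ := by
    intro ρ
    have h := (tt_pow_hasDerivAt (2*m+1) ρ).div_const (2*(m:ℝ)+2)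
    refine h.congr_deriv (Eq.symm ?_)
    rw [hw_eq]
    unfold gg
    have : (2*(m:ℝ)+2) ≠ 0 := by positivity
    push_cast
    field_simp
    ring
  have hlim : Tendsto (fun ρ => tt ρ^(2*m+2)/(2*(m:ℝ)+2)) atTop (𝓝 (1/(2*(m:ℝ)+2))) := by
    simpa using (tt_tendsto.pow (2*m+2)).div_const (2*(m:ℝ)+2)
  exact integrableOn_Ioi_deriv_of_nonneg
    ((((tt_cont.pow _).div_const _)).continuousWithinAt)
    (fun ρ _ => hG ρ) (fun ρ hρ => gg_nonneg m (le_of_lt hρ)) hlim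

lemma PPhi_cont (m : ℕ) : Continuous (PPhi m) := by
  unfold PPhi
  exact ((continuous_const.mul (((tt_cont.pow _).div_const _).sub
    ((tt_cont.pow _).div_const _))).add
    (continuous_const.mul ((tt_cont.pow _).div_const _))).div_const 2

lemma PPhi_zero (m : ℕ) : PPhi m 0 = 0 := by
  simp [PPhi, tt_zero, zero_pow (by omega : 2*m+1 ≠ 0), zero_pow (by omega : 2*m+3 ≠ 0)]

lemma PPhi_tendsto (m : ℕ) : Tendsto (PPhi m) atTop (𝓝 (2/(2*(m:ℝ)+3))) := by
  have h1 : Tendsto (fun ρ => tt ρ^(2*m+1)) atTop (𝓝 1) := by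
    simpa using tt_tendsto.pow (2*m+1)
  have h3 : Tendsto (fun ρ => tt ρ^(2*m+3)) atTop (𝓝 1) := by
    simpa using tt_tendsto.pow (2*m+3)
  have h := ((((h1.div_const (2*(m:ℝ)+1)).sub (h3.div_const (2*(m:ℝ)+3))).const_mul
    (2*(m:ℝ)+1)).add ((h3.div_const (2*(m:ℝ)+3)).const_mul 2)).div_const 2
  have hE : ((2*(m:ℝ)+1)*(1/(2*(m:ℝ)+1) - 1/(2*(m:ℝ)+3)) + 2*(1/(2*(m:ℝ)+3)))/2
      = 2/(2*(m:ℝ)+3) := by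
    have ha : (2*(m:ℝ)+1) ≠ 0 := by positivity
    have hb : (2*(m:ℝ)+3) ≠ 0 := by positivity
    field_simp
    ring
  rw [hE] at h
  exact h

lemma pphi_integral (m : ℕ) : ∫ ρ in Ioi (0:ℝ), pphi m ρ = 2/(2*(m:ℝ)+3) := by
  have := integral_Ioi_of_hasDerivAt_of_nonneg (a := (0:ℝ)) (PPhi_cont m).continuousWithinAt
    (fun ρ _ => PPhi_hasDerivAt m ρ) (fun ρ _ => pphi_nonneg m ρ) (PPhi_tendsto m)
  rw [this, PPhi_zero, sub_zero]

lemma pphi_integrableOn (m : ℕ) : IntegrableOn (pphi m) (Ioi (0:ℝ)) :=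
  integrableOn_Ioi_deriv_of_nonneg (PPhi_cont m).continuousWithinAt
    (fun ρ _ => PPhi_hasDerivAt m ρ) (fun ρ _ => pphi_nonneg m ρ) (PPhi_tendsto m)

lemma gg'_integrableOn (m : ℕ) : IntegrableOn (gg' m) (Ioi (0:ℝ)) :=
  (pphi_integrableOn m).mono' (gg'_cont m).aestronglyMeasurable
    (Filter.Eventually.of_forall fun ρ => by
      rw [Real.norm_eq_abs]; exact gg'_abs_le m ρ)

lemma integrand_eq (m : ℕ) {ρ : ℝ} (hρ : ρ ∈ Ioi (0:ℝ)) :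
    Real.tanh (ρ/2) ^ (2*(m+1)+1) / (2*Real.sinh (ρ/2)^2) = gg m ρ := by
  have hρ0 : (0:ℝ) < ρ := hρ
  have hs : Real.sinh (ρ/2) ≠ 0 := ne_of_gt (Real.sinh_pos_iff.2 (by linarith))
  have hc : Real.cosh (ρ/2) ≠ 0 := (Real.cosh_pos _).ne'
  have htanh : Real.tanh (ρ/2) = tt ρ := Real.tanh_eq_sinh_div_cosh _
  have hq : tt ρ^2 / (2*Real.sinh (ρ/2)^2) = (1 - tt ρ^2)/2 := by
    rw [one_sub_tt_sq]
    unfold tt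
    rw [div_pow]
    field_simp
  rw [htanh, show 2*(m+1)+1 = (2*m+1)+2 by ring]
  unfold gg
  calc tt ρ^((2*m+1)+2) / (2*Real.sinh (ρ/2)^2)
      = tt ρ^(2*m+1) * (tt ρ^2 / (2*Real.sinh (ρ/2)^2)) := by rw [pow_add]; ring
    _ = tt ρ^(2*m+1) * ((1 - tt ρ^2)/2) := by rw [hq]
    _ = (tt ρ^(2*m+1) - tt ρ^(2*m+3))/2 := by
        rw [show 2*m+3 = (2*m+1)+2 by ring, pow_add]; ring

theorem stmt17 (x : ℝ) (k : ℕ) (hk : 1 ≤ k) :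
    (x ≠ 0 →
      ‖∫ ρ in Set.Ioi (0 : ℝ),
          Complex.exp (Complex.I * x * ρ / Real.pi) *
            (Real.tanh (ρ / 2) ^ (2 * k + 1) / (2 * Real.sinh (ρ / 2) ^ 2))‖ ≤
        2 * Real.pi / ((2 * (k : ℝ) - 1) * |x|)) ∧
    |∫ ρ in Set.Ioi (0 : ℝ),
        Real.tanh (ρ / 2) ^ (2 * k + 1) / (2 * Real.sinh (ρ / 2) ^ 2)| =
      1 / (2 * (k : ℝ)) := by
  obtain ⟨m, rfl⟩ : ∃ m, k = m + 1 := ⟨k - 1, by omega⟩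
  constructor
  · intro hx
    have hx' : (0:ℝ) < |x| := abs_pos.2 hx
    have hxC : (x:ℂ) ≠ 0 := Complex.ofReal_ne_zero.2 hx
    have hπC : (Real.pi : ℂ) ≠ 0 := Complex.ofReal_ne_zero.2 Real.pi_ne_zero
    set c : ℂ := Complex.I * x / Real.pi with hc_def
    set C : ℂ := (Real.pi : ℂ) / (Complex.I * x) with hC_def
    have hCc : C * c = 1 := by
      rw [hC_def, hc_def]
      field_simp
    set E : ℝ → ℂ := fun ρ => Complex.exp (c * ρ) with hE_def
    have hE_norm : ∀ ρ : ℝ, ‖E ρ‖ = 1 := by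
      intro ρ
      have h : c * ρ = ((x*ρ/Real.pi : ℝ) : ℂ) * Complex.I := by
        rw [hc_def]; push_cast; ring
      rw [hE_def]
      simp only [h, Complex.norm_exp_ofReal_mul_I]
    have hE_cont : Continuous E :=
      Complex.continuous_exp.comp (continuous_const.mul Complex.continuous_ofReal)
    have hE_deriv : ∀ ρ : ℝ, HasDerivAt E (c * E ρ) ρ := by
      intro ρ
      have h0 : HasDerivAt (fun ρ : ℝ => c * (ρ:ℂ)) c ρ := by
        simpa using (Complex.ofRealCLM.hasDerivAt (x := ρ)).const_mul c
      simpa [hE_def, mul_comm] using h0.cexp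
    have hgC_deriv : ∀ ρ : ℝ, HasDerivAt (fun ρ : ℝ => ((gg m ρ : ℝ):ℂ))
        ((gg' m ρ : ℝ):ℂ) ρ := fun ρ => (gg_hasDerivAt m ρ).ofReal_comp
    set u : ℝ → ℂ := fun ρ => E ρ * ((gg m ρ : ℝ):ℂ) with hu_def
    set v : ℝ → ℂ := fun ρ => E ρ * ((gg' m ρ : ℝ):ℂ) with hv_def
    have hu_int : IntegrableOn u (Ioi (0:ℝ)) :=
      ((gg_integrableOn m).ofReal).bdd_mul hE_cont.aestronglyMeasurable
        (Filter.Eventually.of_forall fun ρ => le_of_eq (hE_norm ρ))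
    have hv_int : IntegrableOn v (Ioi (0:ℝ)) :=
      ((gg'_integrableOn m).ofReal).bdd_mul hE_cont.aestronglyMeasurable
        (Filter.Eventually.of_forall fun ρ => le_of_eq (hE_norm ρ))
    set H : ℝ → ℂ := fun ρ => C * (E ρ * ((gg m ρ : ℝ):ℂ)) with hH_def
    have hH_deriv : ∀ ρ : ℝ, HasDerivAt H (u ρ + C * v ρ) ρ := by
      intro ρ
      have h := ((hE_deriv ρ).mul (hgC_deriv ρ)).const_mul C
      refine h.congr_deriv (Eq.symm ?_)
      rw [hu_def, hv_def]
      simp only []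
      linear_combination (-(E ρ * ((gg m ρ : ℝ):ℂ))) * hCc
    have hH_cont : Continuous H :=
      continuous_const.mul (hE_cont.mul (Complex.continuous_ofReal.comp (gg_cont m)))
    have hH_tendsto : Tendsto H atTop (𝓝 0) := by
      rw [tendsto_zero_iff_norm_tendsto_zero]
      have hnorm : ∀ ρ : ℝ, ‖H ρ‖ = ‖C‖ * |gg m ρ| := by
        intro ρ
        rw [hH_def]
        simp only [norm_mul, hE_norm, Complex.norm_real, Real.norm_eq_abs, one_mul]
      have h1 : Tendsto (fun ρ => ‖C‖ * |gg m ρ|) atTop (𝓝 0) := by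
        have := ((gg_tendsto m).abs).const_mul ‖C‖
        simpa using this
      exact h1.congr (fun ρ => (hnorm ρ).symm)
    have hH0 : H 0 = 0 := by
      rw [hH_def]; simp [gg_zero m]
    have hFTC := integral_Ioi_of_hasDerivAt_of_tendsto hH_cont.continuousWithinAt
      (fun ρ _ => hH_deriv ρ) (hu_int.add (hv_int.const_mul C)) hH_tendsto
    rw [hH0, sub_zero] at hFTC
    have hsplit : (∫ ρ in Ioi (0:ℝ), (u ρ + C * v ρ))
        = (∫ ρ in Ioi (0:ℝ), u ρ) + C * ∫ ρ in Ioi (0:ℝ), v ρ := by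
      rw [integral_add hu_int (hv_int.const_mul C), integral_const_mul]
    have hu_eq : (∫ ρ in Ioi (0:ℝ), u ρ) = -(C * ∫ ρ in Ioi (0:ℝ), v ρ) := by
      rw [hsplit] at hFTC
      exact eq_neg_of_add_eq_zero_left hFTC
    have hcongr : (∫ ρ in Set.Ioi (0 : ℝ),
        Complex.exp (Complex.I * x * ρ / Real.pi) *
          (Real.tanh (ρ / 2) ^ (2 * (m+1) + 1) / (2 * Real.sinh (ρ / 2) ^ 2)))
        = ∫ ρ in Ioi (0:ℝ), u ρ := by
      refine setIntegral_congr_fun measurableSet_Ioi (fun ρ hρ => ?_)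
      rw [hu_def]
      simp only []
      rw [hE_def]
      simp only []
      congr 1
      · congr 1
        rw [hc_def]
        push_cast
        ring
      · rw [← integrand_eq m hρ]
        push_cast
        ring
    have hCnorm : ‖C‖ = Real.pi/|x| := by
      rw [hC_def]
      simp [norm_div, norm_mul, Complex.norm_I, Complex.norm_real,
        abs_of_pos Real.pi_pos]
    have hvnorm : ‖∫ ρ in Ioi (0:ℝ), v ρ‖ ≤ 2/(2*(m:ℝ)+3) := by
      calc ‖∫ ρ in Ioi (0:ℝ), v ρ‖ ≤ ∫ ρ in Ioi (0:ℝ), ‖v ρ‖ :=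
            norm_integral_le_integral_norm _
        _ = ∫ ρ in Ioi (0:ℝ), |gg' m ρ| := by
            refine integral_congr_ae (Filter.Eventually.of_forall fun ρ => ?_)
            rw [hv_def]
            simp [norm_mul, hE_norm, Complex.norm_real, Real.norm_eq_abs]
        _ ≤ ∫ ρ in Ioi (0:ℝ), pphi m ρ :=
            integral_mono ((gg'_integrableOn m).abs) (pphi_integrableOn m)
              (fun ρ => gg'_abs_le m ρ)
        _ = 2/(2*(m:ℝ)+3) := pphi_integral m
    have hfin : Real.pi/|x| * (2/(2*(m:ℝ)+3)) ≤ 2*Real.pi/((2*((m:ℝ)+1)-1)*|x|) := by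
      rw [div_mul_div_comm, show 2*((m:ℝ)+1)-1 = 2*(m:ℝ)+1 by ring,
        div_le_div_iff₀ (by positivity) (by positivity)]
      nlinarith [mul_pos Real.pi_pos hx', Real.pi_pos, hx']
    calc ‖∫ ρ in Set.Ioi (0 : ℝ),
        Complex.exp (Complex.I * x * ρ / Real.pi) *
          (Real.tanh (ρ / 2) ^ (2 * (m+1) + 1) / (2 * Real.sinh (ρ / 2) ^ 2))‖
        = ‖C‖ * ‖∫ ρ in Ioi (0:ℝ), v ρ‖ := by rw [hcongr, hu_eq, norm_neg, norm_mul]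
      _ ≤ Real.pi/|x| * (2/(2*(m:ℝ)+3)) := by
          rw [hCnorm]
          exact mul_le_mul_of_nonneg_left hvnorm (by positivity)
      _ ≤ 2 * Real.pi / ((2 * (((m+1 : ℕ)) : ℝ) - 1) * |x|) := by
          push_cast
          exact hfin
  · rw [setIntegral_congr_fun measurableSet_Ioi (fun ρ hρ => integrand_eq m hρ),
      gg_integral m]
    rw [abs_of_pos (by positivity)]
    push_cast
    ring
end
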